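/- arXiv:2206.10723 — 5 statements merged into one kernel-verified Lean document; each statement's English description precedes it below -/
import Mathlib

section
/- Let γ < 1 and let h : [0,∞) → ℝ be continuous with h(x) ∼ x^{−1} (log x)^{−γ} as x → ∞. Then, as R → ∞, (1/(2R)) ∫₀^R ∫₀^R h(|x−y|) dx dy ∼ ∫₀^R h(x) dx, and ∫₀^R h(x) dx ∼ (1/(1−γ)) R h(R) (log R) ∼ (1/(1−γ)) (log R)^{1−γ}. -/
open Filter

section Aux
open Real Set intervalIntegral MeasureTheory

lemma aux_tendsto_ratio (G : ℝ → ℝ) (hG : Tendsto G atTop atTop) (c₁ c₂ c₃ : ℝ) :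
    Tendsto (fun R => (c₁ + c₂ * (G R - c₃)) / G R) atTop (nhds c₂) := by
  have h0 : ∀ᶠ R in atTop, G R ≠ 0 := (hG.eventually_gt_atTop 0).mono fun R h => ne_of_gt h
  have h1 : Tendsto (fun R => (c₁ - c₂ * c₃) / G R + c₂) atTop (nhds (0 + c₂)) :=
    (tendsto_const_nhds.div_atTop hG).add tendsto_const_nhds
  rw [zero_add] at h1
  refine h1.congr' (h0.mono fun R hR => ?_)
  field_simp
  ring

lemma aux_g_contAt (γ : ℝ) {x : ℝ} (hx : 1 < x) :
    ContinuousAt (fun x : ℝ => x⁻¹ * Real.log x ^ (-γ)) x := by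
  have hx0 : (0:ℝ) < x := by linarith
  exact (continuousAt_inv₀ (ne_of_gt hx0)).mul
    ((Real.continuousAt_rpow_const _ _ (Or.inl (ne_of_gt (Real.log_pos hx)))).comp
      (Real.continuousAt_log (ne_of_gt hx0)))

lemma aux_ftc (γ : ℝ) (hγ : γ < 1) {a b : ℝ} (ha : 1 < a) (hab : a ≤ b) :
    ∫ x in a..b, x⁻¹ * Real.log x ^ (-γ)
      = (1/(1-γ)) * Real.log b ^ (1-γ) - (1/(1-γ)) * Real.log a ^ (1-γ) := by
  have hne : (1:ℝ) - γ ≠ 0 := by linarith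
  have key : ∀ x ∈ Set.uIcc a b, HasDerivAt (fun y => (1/(1-γ)) * Real.log y ^ (1-γ))
      (x⁻¹ * Real.log x ^ (-γ)) x := by
    intro x hx
    rw [Set.uIcc_of_le hab] at hx
    have hx1 : 1 < x := lt_of_lt_of_le ha hx.1
    have hx0 : 0 < x := by linarith
    have hlx : 0 < Real.log x := Real.log_pos hx1
    have hlog : HasDerivAt Real.log x⁻¹ x := by
      simpa using Real.hasDerivAt_log (ne_of_gt hx0)
    have hrpow : HasDerivAt (fun y : ℝ => y ^ (1-γ)) ((1-γ) * Real.log x ^ (1-γ-1)) (Real.log x) :=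
      Real.hasDerivAt_rpow_const (Or.inl (ne_of_gt hlx))
    have := (hrpow.comp x hlog).const_mul (1/(1-γ))
    refine this.congr_deriv ?_
    have h2 : (1:ℝ) - γ - 1 = -γ := by ring
    rw [h2]
    field_simp
  have hint : IntervalIntegrable (fun x => x⁻¹ * Real.log x ^ (-γ)) MeasureTheory.volume a b := by
    apply ContinuousOn.intervalIntegrable
    intro x hx
    rw [Set.uIcc_of_le hab] at hx
    exact (aux_g_contAt γ (lt_of_lt_of_le ha hx.1)).continuousWithinAt
  exact intervalIntegral.integral_eq_sub_of_hasDerivAt key hint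

lemma aux_int_h (h : ℝ → ℝ) (hcont : ContinuousOn h (Set.Ici 0)) {a b : ℝ}
    (ha : 0 ≤ a) (hb : 0 ≤ b) : IntervalIntegrable h MeasureTheory.volume a b :=
  (hcont.mono (fun x hx => by
    rcases Set.mem_uIcc.mp hx with ⟨h1,_⟩|⟨h1,_⟩ <;> exact le_trans (by positivity) h1)).intervalIntegrable

lemma aux_G_top (γ : ℝ) (hγ : γ < 1) :
    Tendsto (fun R => (1/(1-γ)) * Real.log R ^ (1-γ)) atTop atTop := by
  have := (tendsto_rpow_atTop (by linarith : (0:ℝ) < 1-γ)).comp Real.tendsto_log_atTop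
  exact this.const_mul_atTop (one_div_pos.mpr (by linarith))

lemma aux_stmt3 (γ : ℝ) (hγ : γ < 1) (h : ℝ → ℝ)
    (hcont : ContinuousOn h (Set.Ici 0))
    (hasymp : Tendsto (fun x => h x / (x⁻¹ * Real.log x ^ (-γ))) atTop (nhds 1)) :
    Tendsto (fun R => (∫ x in (0:ℝ)..R, h x) / ((1 / (1 - γ)) * Real.log R ^ (1 - γ)))
      atTop (nhds 1) := by
  set g : ℝ → ℝ := fun x => x⁻¹ * Real.log x ^ (-γ) with hg
  set G : ℝ → ℝ := fun R => (1/(1-γ)) * Real.log R ^ (1-γ) with hG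
  set φ : ℝ → ℝ := fun R => ∫ x in (0:ℝ)..R, h x with hφ
  have hGtop : Tendsto G atTop atTop := aux_G_top γ hγ
  rw [Metric.tendsto_nhds]
  intro ε hε
  set δ := ε/2 with hδdef
  have hδ : 0 < δ := by positivity
  have hev : ∀ᶠ x in atTop, |h x / g x - 1| < δ := by
    have := Metric.tendsto_nhds.mp hasymp δ hδ
    simpa [Real.dist_eq] using this
  obtain ⟨X, hX⟩ := (hev.and (eventually_ge_atTop 2)).exists_forall_of_atTop
  have hX2 : 2 ≤ X := (hX X le_rfl).2
  have hX1 : (1:ℝ) < X := by linarith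
  have hX0 : (0:ℝ) ≤ X := by linarith
  -- pointwise bounds for x ≥ X
  have hgpos : ∀ x, X ≤ x → 0 < g x := by
    intro x hx
    have hx1 : (1:ℝ) < x := lt_of_lt_of_le hX1 hx
    have : 0 < Real.log x := Real.log_pos hx1
    have hx0 : (0:ℝ) < x := by linarith
    simp only [hg]
    positivity
  have hbound : ∀ x, X ≤ x → (1-δ) * g x ≤ h x ∧ h x ≤ (1+δ) * g x := by
    intro x hx
    have habs := (hX x hx).1
    rw [abs_sub_lt_iff] at habs
    have hgx := hgpos x hx
    constructor
    · have : 1 - δ < h x / g x := by linarith [habs.2]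
      calc (1-δ) * g x ≤ (h x / g x) * g x := by
            exact mul_le_mul_of_nonneg_right this.le hgx.le
        _ = h x := div_mul_cancel₀ _ (ne_of_gt hgx)
    · have : h x / g x < 1 + δ := by linarith [habs.1]
      calc h x = (h x / g x) * g x := (div_mul_cancel₀ _ (ne_of_gt hgx)).symm
        _ ≤ (1+δ) * g x := mul_le_mul_of_nonneg_right this.le hgx.le
  -- integral bounds for R ≥ X
  have hgint : ∀ R, X ≤ R → IntervalIntegrable g MeasureTheory.volume X R := by
    intro R hR
    apply ContinuousOn.intervalIntegrable
    intro x hx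
    rw [Set.uIcc_of_le hR] at hx
    exact (aux_g_contAt γ (lt_of_lt_of_le hX1 hx.1)).continuousWithinAt
  have hkey : ∀ R, X ≤ R →
      φ X + (1-δ) * (G R - G X) ≤ φ R ∧ φ R ≤ φ X + (1+δ) * (G R - G X) := by
    intro R hR
    have hXR0 : (0:ℝ) ≤ R := le_trans hX0 hR
    have hgR := hgint R hR
    have hhR : IntervalIntegrable h MeasureTheory.volume X R := aux_int_h h hcont hX0 hXR0
    have hsplit : φ R = φ X + ∫ x in X..R, h x :=
      (intervalIntegral.integral_add_adjacent_intervals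
        (aux_int_h h hcont le_rfl hX0) hhR).symm
    have hgval : ∫ x in X..R, g x = G R - G X := aux_ftc γ hγ hX1 hR
    constructor
    · have : ∫ x in X..R, (1-δ) * g x ≤ ∫ x in X..R, h x := by
        apply intervalIntegral.integral_mono_on hR (hgR.const_mul _) hhR
        intro x hx
        exact (hbound x hx.1).1
      rw [intervalIntegral.integral_const_mul, hgval] at this
      linarith [hsplit]
    · have : ∫ x in X..R, h x ≤ ∫ x in X..R, (1+δ) * g x := by
        apply intervalIntegral.integral_mono_on hR hhR (hgR.const_mul _)
        intro x hx
        exact (hbound x hx.1).2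
      rw [intervalIntegral.integral_const_mul, hgval] at this
      linarith [hsplit]
  -- limits of bounds
  have hlow : Tendsto (fun R => (φ X + (1-δ) * (G R - G X)) / G R) atTop (nhds (1-δ)) :=
    aux_tendsto_ratio G hGtop _ _ _
  have hup : Tendsto (fun R => (φ X + (1+δ) * (G R - G X)) / G R) atTop (nhds (1+δ)) :=
    aux_tendsto_ratio G hGtop _ _ _
  have e1 : ∀ᶠ R in atTop, 1 - ε < (φ X + (1-δ) * (G R - G X)) / G R :=
    hlow.eventually_const_lt (by linarith)
  have e2 : ∀ᶠ R in atTop, (φ X + (1+δ) * (G R - G X)) / G R < 1 + ε :=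
    hup.eventually_lt_const (by linarith)
  have e3 : ∀ᶠ R in atTop, 0 < G R := hGtop.eventually_gt_atTop 0
  have e4 : ∀ᶠ R in atTop, X ≤ R := eventually_ge_atTop X
  filter_upwards [e1, e2, e3, e4] with R h1 h2 h3 h4
  have hk := hkey R h4
  have hb1 : (φ X + (1-δ) * (G R - G X)) / G R ≤ φ R / G R :=
    div_le_div_of_nonneg_right hk.1 h3.le
  have hb2 : φ R / G R ≤ (φ X + (1+δ) * (G R - G X)) / G R :=
    div_le_div_of_nonneg_right hk.2 h3.le
  rw [Real.dist_eq, abs_sub_lt_iff]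
  constructor
  · linarith
  · linarith

lemma aux_h_ne (γ : ℝ) (h : ℝ → ℝ)
    (hasymp : Tendsto (fun x => h x / (x⁻¹ * Real.log x ^ (-γ))) atTop (nhds 1)) :
    ∀ᶠ x in atTop, h x ≠ 0 := by
  have := Metric.tendsto_nhds.mp hasymp 1 one_pos
  filter_upwards [this] with x hx hx0
  rw [Real.dist_eq, hx0, zero_div, zero_sub, abs_neg, abs_one] at hx
  exact lt_irrefl 1 hx

lemma aux_stmt2mid (γ : ℝ) (hγ : γ < 1) (h : ℝ → ℝ)
    (hcont : ContinuousOn h (Set.Ici 0))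
    (hasymp : Tendsto (fun x => h x / (x⁻¹ * Real.log x ^ (-γ))) atTop (nhds 1)) :
    Tendsto (fun R => (∫ x in (0:ℝ)..R, h x) / ((1 / (1 - γ)) * R * h R * Real.log R))
      atTop (nhds 1) := by
  have hinv : Tendsto (fun x => (x⁻¹ * Real.log x ^ (-γ)) / h x) atTop (nhds 1) := by
    have := hasymp.inv₀ one_ne_zero
    rw [inv_one] at this
    refine this.congr fun x => ?_
    rw [inv_div]
  have hmul := (aux_stmt3 γ hγ h hcont hasymp).mul hinv
  rw [mul_one] at hmul
  refine hmul.congr' ?_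
  filter_upwards [aux_h_ne γ h hasymp, eventually_gt_atTop 1] with R hne hR1
  have hR0 : (0:ℝ) < R := by linarith
  have hlog : 0 < Real.log R := Real.log_pos hR1
  have hP : (0:ℝ) < Real.log R ^ (-γ) := Real.rpow_pos_of_pos hlog _
  have hL : Real.log R ^ (1-γ) = Real.log R * Real.log R ^ (-γ) := by
    rw [show (1:ℝ)-γ = 1 + (-γ) by ring, Real.rpow_add hlog, Real.rpow_one]
  have hc : (1:ℝ) - γ ≠ 0 := by linarith
  rw [div_mul_div_comm, hL]
  field_simp

lemma aux_habs_cont (h : ℝ → ℝ) (hcont : ContinuousOn h (Set.Ici 0)) :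
    Continuous (fun u => h |u|) :=
  hcont.comp_continuous continuous_abs (fun u => abs_nonneg u)

lemma aux_inner (h : ℝ → ℝ) (hcont : ContinuousOn h (Set.Ici 0)) {R x : ℝ}
    (hx : 0 ≤ x) (hxR : x ≤ R) :
    ∫ y in (0:ℝ)..R, h |x - y| =
      (∫ t in (0:ℝ)..x, h t) + ∫ t in (0:ℝ)..(R-x), h t := by
  have hco := aux_habs_cont h hcont
  have e0 : ∫ y in (0:ℝ)..R, h |x - y| = ∫ u in (x-R)..(x-0), h |u| :=
    intervalIntegral.integral_comp_sub_left (fun u => h |u|) x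
  rw [e0, sub_zero]
  rw [← intervalIntegral.integral_add_adjacent_intervals
      (hco.intervalIntegrable (x-R) 0) (hco.intervalIntegrable 0 x)]
  have h1 : ∫ u in (0:ℝ)..x, h |u| = ∫ t in (0:ℝ)..x, h t := by
    apply intervalIntegral.integral_congr
    intro u hu
    rw [Set.uIcc_of_le hx] at hu
    simp [abs_of_nonneg hu.1]
  have h2 : ∫ u in (x-R)..(0:ℝ), h |u| = ∫ t in (0:ℝ)..(R-x), h t := by
    have e1 : ∫ u in (x-R)..(0:ℝ), h |u| = ∫ u in (x-R)..(0:ℝ), h (-u) := by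
      apply intervalIntegral.integral_congr
      intro u hu
      rw [Set.uIcc_of_le (by linarith : x - R ≤ 0)] at hu
      simp [abs_of_nonpos hu.2]
    rw [e1, intervalIntegral.integral_comp_neg (fun u => h u)]
    norm_num
  rw [h1, h2]
  ring

lemma aux_phi_deriv (h : ℝ → ℝ) (hcont : ContinuousOn h (Set.Ici 0)) {x : ℝ} (hx : 0 < x) :
    HasDerivAt (fun u => ∫ t in (0:ℝ)..u, h t) (h x) x := by
  apply intervalIntegral.integral_hasDerivAt_right (aux_int_h h hcont le_rfl hx.le)
  · exact ⟨Set.Ici 0, Ici_mem_nhds hx, hcont.aestronglyMeasurable measurableSet_Ici⟩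
  · exact hcont.continuousAt (Ici_mem_nhds hx)

lemma aux_phi_cont (h : ℝ → ℝ) (hcont : ContinuousOn h (Set.Ici 0)) {R : ℝ} (hR : 0 ≤ R) :
    ContinuousOn (fun u => ∫ t in (0:ℝ)..u, h t) (Set.Icc 0 R) := by
  have := continuousOn_primitive_interval
    ((intervalIntegrable_iff').mp (aux_int_h h hcont le_rfl hR))
  rwa [Set.uIcc_of_le hR] at this

lemma aux_parts (h : ℝ → ℝ) (hcont : ContinuousOn h (Set.Ici 0)) {R : ℝ} (hR : 0 ≤ R) :
    ∫ x in (0:ℝ)..R, (∫ t in (0:ℝ)..x, h t)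
      = R * (∫ t in (0:ℝ)..R, h t) - ∫ x in (0:ℝ)..R, x * h x := by
  set φ : ℝ → ℝ := fun u => ∫ t in (0:ℝ)..u, h t with hφ
  have hφc : ContinuousOn φ (Set.Icc 0 R) := aux_phi_cont h hcont hR
  have hxh : ContinuousOn (fun x => x * h x) (Set.Icc 0 R) :=
    continuousOn_id.mul (hcont.mono (fun x hx => hx.1))
  have hφint : IntervalIntegrable φ MeasureTheory.volume 0 R := by
    apply ContinuousOn.intervalIntegrable
    rwa [Set.uIcc_of_le hR]
  have hxhint : IntervalIntegrable (fun x => x * h x) MeasureTheory.volume 0 R := by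
    apply ContinuousOn.intervalIntegrable
    rwa [Set.uIcc_of_le hR]
  have key : ∫ x in (0:ℝ)..R, (φ x + x * h x) = R * φ R - 0 * φ 0 := by
    apply intervalIntegral.integral_eq_sub_of_hasDeriv_right_of_le hR
    · exact (continuousOn_id.mul hφc : ContinuousOn (fun x => x * φ x) _)
    · intro x hx
      have hd : HasDerivAt (fun y => y * φ y) (φ x + x * h x) x := by
        simpa using (hasDerivAt_id x).fun_mul (aux_phi_deriv h hcont hx.1)
      exact hd.hasDerivWithinAt
    · exact hφint.add hxhint
  rw [intervalIntegral.integral_add hφint hxhint] at key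
  have := key
  rw [zero_mul, sub_zero] at this
  linarith [this]

lemma aux_double (h : ℝ → ℝ) (hcont : ContinuousOn h (Set.Ici 0)) {R : ℝ} (hR : 0 ≤ R) :
    ∫ x in (0:ℝ)..R, ∫ y in (0:ℝ)..R, h |x - y|
      = 2 * (R * (∫ t in (0:ℝ)..R, h t) - ∫ x in (0:ℝ)..R, x * h x) := by
  set φ : ℝ → ℝ := fun u => ∫ t in (0:ℝ)..u, h t with hφ
  have hφc : ContinuousOn φ (Set.Icc 0 R) := aux_phi_cont h hcont hR
  have e1 : ∫ x in (0:ℝ)..R, ∫ y in (0:ℝ)..R, h |x - y|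
      = ∫ x in (0:ℝ)..R, (φ x + φ (R - x)) := by
    apply intervalIntegral.integral_congr
    intro x hx
    rw [Set.uIcc_of_le hR] at hx
    exact aux_inner h hcont hx.1 hx.2
  have hφint : IntervalIntegrable φ MeasureTheory.volume 0 R := by
    apply ContinuousOn.intervalIntegrable; rwa [Set.uIcc_of_le hR]
  have hφint2 : IntervalIntegrable (fun x => φ (R - x)) MeasureTheory.volume 0 R := by
    apply ContinuousOn.intervalIntegrable
    rw [Set.uIcc_of_le hR]
    apply hφc.comp (continuous_const.sub continuous_id).continuousOn
    intro x hx
    rw [Set.mem_Icc] at hx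
    show R - x ∈ Set.Icc (0:ℝ) R
    rw [Set.mem_Icc]
    exact ⟨by linarith [hx.2], by linarith [hx.1]⟩
  have e2 : ∫ x in (0:ℝ)..R, φ (R - x) = ∫ x in (0:ℝ)..R, φ x := by
    have := intervalIntegral.integral_comp_sub_left φ R (a := 0) (b := R)
    simpa using this
  rw [e1, intervalIntegral.integral_add hφint hφint2, e2, aux_parts h hcont hR]
  ring

lemma aux_q (γ : ℝ) (hγ : γ < 1) (h : ℝ → ℝ)
    (hcont : ContinuousOn h (Set.Ici 0))
    (hasymp : Tendsto (fun x => h x / (x⁻¹ * Real.log x ^ (-γ))) atTop (nhds 1)) :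
    Tendsto (fun R => ((1/R) * ∫ x in (0:ℝ)..R, x * h x)
      / ((1/(1-γ)) * Real.log R ^ (1-γ))) atTop (nhds 0) := by
  set g : ℝ → ℝ := fun x => x⁻¹ * Real.log x ^ (-γ) with hg
  set G : ℝ → ℝ := fun R => (1/(1-γ)) * Real.log R ^ (1-γ) with hGdef
  set I : ℝ → ℝ := fun R => ∫ x in (0:ℝ)..R, x * h x with hI
  have hGtop : Tendsto G atTop atTop := aux_G_top γ hγ
  have hev : ∀ᶠ x in atTop, |h x / g x - 1| < 1 := by
    have := Metric.tendsto_nhds.mp hasymp 1 one_pos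
    simpa [Real.dist_eq] using this
  obtain ⟨X, hX⟩ := (hev.and (eventually_ge_atTop 2)).exists_forall_of_atTop
  have hX1 : (1:ℝ) < X := by linarith [(hX X le_rfl).2]
  have hX0 : (0:ℝ) ≤ X := by linarith
  set K := Real.log X ^ (-γ) with hK
  have hKpos : 0 < K := Real.rpow_pos_of_pos (Real.log_pos hX1) _
  -- pointwise: for x ≥ X, 0 ≤ x * h x ≤ 2 * (K + Real.log R ^ (-γ)) whenever x ≤ R
  have hpt : ∀ R, X ≤ R → ∀ x ∈ Set.Icc X R,
      0 ≤ x * h x ∧ x * h x ≤ 2 * (K + Real.log R ^ (-γ)) := by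
    intro R hR x hx
    have hx1 : (1:ℝ) < x := lt_of_lt_of_le hX1 hx.1
    have hx0 : (0:ℝ) < x := by linarith
    have hlx : 0 < Real.log x := Real.log_pos hx1
    have hgpos : 0 < g x := by
      simp only [hg]; positivity
    have habs := (hX x hx.1).1
    rw [abs_sub_lt_iff] at habs
    have hhx0 : 0 ≤ h x := by
      by_contra hneg
      push_neg at hneg
      have : h x / g x < 0 := div_neg_of_neg_of_pos hneg hgpos
      linarith [habs.2]
    have hup : h x ≤ 2 * g x := by
      have h2 : h x / g x < 2 := by linarith [habs.1]
      calc h x = (h x / g x) * g x := (div_mul_cancel₀ _ (ne_of_gt hgpos)).symm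
        _ ≤ 2 * g x := mul_le_mul_of_nonneg_right h2.le hgpos.le
    have hxg : x * g x = Real.log x ^ (-γ) := by
      simp only [hg]
      field_simp
    constructor
    · exact mul_nonneg hx0.le hhx0
    · calc x * h x ≤ x * (2 * g x) := mul_le_mul_of_nonneg_left hup hx0.le
        _ = 2 * (x * g x) := by ring
        _ = 2 * Real.log x ^ (-γ) := by rw [hxg]
        _ ≤ 2 * (K + Real.log R ^ (-γ)) := by
            have hlR : Real.log x ≤ Real.log R :=
              Real.log_le_log hx0 hx.2
            have hlX : Real.log X ≤ Real.log x :=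
              Real.log_le_log (by linarith) hx.1
            have hlXpos : 0 < Real.log X := Real.log_pos hX1
            rcases le_or_gt 0 (-γ) with hsgn | hsgn
            · have : Real.log x ^ (-γ) ≤ Real.log R ^ (-γ) :=
                Real.rpow_le_rpow hlx.le hlR hsgn
              have hKnn : 0 ≤ K := hKpos.le
              linarith
            · have : Real.log x ^ (-γ) ≤ Real.log X ^ (-γ) :=
                Real.rpow_le_rpow_of_nonpos hlXpos hlX hsgn.le
              have : Real.log x ^ (-γ) ≤ K := by rwa [hK]
              have hRnn : 0 ≤ Real.log R ^ (-γ) :=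
                (Real.rpow_pos_of_pos (Real.log_pos (by linarith : 1 < R)) _).le
              linarith
  -- bound on I R
  have hIbound : ∀ R, X ≤ R → |I R| ≤ |I X| + 2 * R * (K + Real.log R ^ (-γ)) := by
    intro R hR
    have hR0 : (0:ℝ) ≤ R := le_trans hX0 hR
    have hxhint : ∀ a b : ℝ, 0 ≤ a → 0 ≤ b →
        IntervalIntegrable (fun x => x * h x) MeasureTheory.volume a b := by
      intro a b ha hb
      exact (continuous_id.continuousOn.mul (hcont.mono (fun x hx => by
        rcases Set.mem_uIcc.mp hx with ⟨h1,_⟩|⟨h1,_⟩ <;>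
          exact le_trans (by positivity) h1))).intervalIntegrable
    have hsplit : I R = I X + ∫ x in X..R, x * h x :=
      (intervalIntegral.integral_add_adjacent_intervals
        (hxhint 0 X le_rfl hX0) (hxhint X R hX0 hR0)).symm
    have hnn : 0 ≤ ∫ x in X..R, x * h x := by
      apply intervalIntegral.integral_nonneg hR
      intro x hx
      exact (hpt R hR x hx).1
    have hub : ∫ x in X..R, x * h x ≤ (R - X) * (2 * (K + Real.log R ^ (-γ))) := by
      have := intervalIntegral.integral_mono_on hR (hxhint X R hX0 hR0)
        (intervalIntegrable_const) (fun x hx => (hpt R hR x hx).2)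
      rwa [intervalIntegral.integral_const, smul_eq_mul] at this
    have hRmX : (R - X) * (2 * (K + Real.log R ^ (-γ))) ≤ 2 * R * (K + Real.log R ^ (-γ)) := by
      have hRnn : 0 ≤ K + Real.log R ^ (-γ) := by
        have : 0 ≤ Real.log R ^ (-γ) :=
          (Real.rpow_pos_of_pos (Real.log_pos (by linarith : 1 < R)) _).le
        linarith
      nlinarith
    calc |I R| = |I X + ∫ x in X..R, x * h x| := by rw [hsplit]
      _ ≤ |I X| + |∫ x in X..R, x * h x| := abs_add_le _ _
      _ = |I X| + ∫ x in X..R, x * h x := by rw [abs_of_nonneg hnn]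
      _ ≤ |I X| + 2 * R * (K + Real.log R ^ (-γ)) := by linarith
  -- the dominating function tends to 0
  have hdom : Tendsto (fun R => (|I X| / R + 2 * K + 2 * Real.log R ^ (-γ)) / G R)
      atTop (nhds 0) := by
    have t1 : Tendsto (fun R => (|I X| / R) * (G R)⁻¹) atTop (nhds 0) := by
      have a1 : Tendsto (fun R : ℝ => |I X| / R) atTop (nhds 0) :=
        tendsto_const_nhds.div_atTop tendsto_id
      have a2 : Tendsto (fun R => (G R)⁻¹) atTop (nhds 0) := hGtop.inv_tendsto_atTop
      simpa using a1.mul a2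
    have t2 : Tendsto (fun R => (2*K) * (G R)⁻¹) atTop (nhds 0) := by
      simpa using (tendsto_const_nhds (x := 2*K)).mul hGtop.inv_tendsto_atTop
    have t3 : Tendsto (fun R => (2 * Real.log R ^ (-γ)) * (G R)⁻¹) atTop (nhds 0) := by
      have key : ∀ᶠ R in atTop, (2 * Real.log R ^ (-γ)) * (G R)⁻¹
          = (2 * (1-γ)) * (Real.log R)⁻¹ := by
        filter_upwards [eventually_gt_atTop 1] with R hR1
        have hlR : 0 < Real.log R := Real.log_pos hR1
        have hne : (1:ℝ) - γ ≠ 0 := by linarith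
        have hcancel : Real.log R ^ (-γ) / Real.log R ^ (1-γ) = (Real.log R)⁻¹ := by
          rw [← Real.rpow_sub hlR, show -γ - (1-γ) = (-1:ℝ) by ring, Real.rpow_neg_one]
        have hQ : Real.log R ^ (1-γ) ≠ 0 := (Real.rpow_pos_of_pos hlR _).ne'
        rw [← hcancel]
        simp only [hGdef]
        field_simp
      have lim : Tendsto (fun R => (2 * (1-γ)) * (Real.log R)⁻¹) atTop (nhds 0) := by
        simpa using (tendsto_const_nhds (x := 2*(1-γ))).mul
          Real.tendsto_log_atTop.inv_tendsto_atTop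
      exact lim.congr' (key.mono fun R hR => hR.symm)
    have := (t1.add t2).add t3
    rw [add_zero, add_zero] at this
    refine this.congr (fun R => ?_)
    rw [div_eq_mul_inv]
    ring
  rw [tendsto_zero_iff_abs_tendsto_zero]
  apply squeeze_zero' (Filter.Eventually.of_forall (fun R => abs_nonneg _)) _ hdom
  filter_upwards [eventually_ge_atTop X, hGtop.eventually_gt_atTop 0] with R hRX hG
  have hR1 : (1:ℝ) < R := lt_of_lt_of_le hX1 hRX
  have hR0 : (0:ℝ) < R := by linarith
  have hRG : 0 < R * G R := by positivity
  have heq : (1/R) * I R / G R = I R / (R * G R) := by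
    rw [one_div_mul_eq_div, div_div]
  rw [heq, abs_div, abs_of_pos hRG]
  have step1 : |I R| / (R * G R) ≤ (|I X| + 2 * R * (K + Real.log R ^ (-γ))) / (R * G R) :=
    div_le_div_of_nonneg_right (hIbound R hRX) hRG.le
  have step2 : (|I X| + 2 * R * (K + Real.log R ^ (-γ))) / (R * G R)
      = (|I X| / R + 2 * K + 2 * Real.log R ^ (-γ)) / G R := by
    rw [← div_div]
    congr 1
    field_simp
    ring
  rw [step2] at step1
  exact step1

lemma aux_phi_ne (γ : ℝ) (hγ : γ < 1) (h : ℝ → ℝ)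
    (hcont : ContinuousOn h (Set.Ici 0))
    (hasymp : Tendsto (fun x => h x / (x⁻¹ * Real.log x ^ (-γ))) atTop (nhds 1)) :
    ∀ᶠ R in atTop, (∫ x in (0:ℝ)..R, h x) ≠ 0 := by
  have h3 := aux_stmt3 γ hγ h hcont hasymp
  have := Metric.tendsto_nhds.mp h3 1 one_pos
  filter_upwards [this] with R hR hc
  rw [Real.dist_eq, hc, zero_div, zero_sub, abs_neg, abs_one] at hR
  exact lt_irrefl 1 hR

lemma aux_stmt1 (γ : ℝ) (hγ : γ < 1) (h : ℝ → ℝ)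
    (hcont : ContinuousOn h (Set.Ici 0))
    (hasymp : Tendsto (fun x => h x / (x⁻¹ * Real.log x ^ (-γ))) atTop (nhds 1)) :
    Tendsto (fun R =>
        ((1 / (2 * R)) * ∫ x in (0:ℝ)..R, ∫ y in (0:ℝ)..R, h |x - y|) /
          (∫ x in (0:ℝ)..R, h x)) atTop (nhds 1) := by
  set G : ℝ → ℝ := fun R => (1/(1-γ)) * Real.log R ^ (1-γ) with hGdef
  set φ : ℝ → ℝ := fun R => ∫ x in (0:ℝ)..R, h x with hφ
  set I : ℝ → ℝ := fun R => ∫ x in (0:ℝ)..R, x * h x with hI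
  have hGφ : Tendsto (fun R => G R / φ R) atTop (nhds 1) := by
    have := (aux_stmt3 γ hγ h hcont hasymp).inv₀ one_ne_zero
    rw [inv_one] at this
    refine this.congr fun R => ?_
    rw [inv_div]
  have hq' : Tendsto (fun R => ((1/R) * I R) / φ R) atTop (nhds 0) := by
    have hmul := (aux_q γ hγ h hcont hasymp).mul hGφ
    rw [zero_mul] at hmul
    refine hmul.congr' ?_
    have hGne : ∀ᶠ R in atTop, G R ≠ 0 := by
      have hGtop : Tendsto G atTop atTop := by
        have := (tendsto_rpow_atTop (by linarith : (0:ℝ) < 1-γ)).comp Real.tendsto_log_atTop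
        exact this.const_mul_atTop (one_div_pos.mpr (by linarith))
      exact (hGtop.eventually_gt_atTop 0).mono fun R hR => ne_of_gt hR
    filter_upwards [hGne, aux_phi_ne γ hγ h hcont hasymp, eventually_gt_atTop 0] with R hG hφne hR0
    have hne : (1:ℝ) - γ ≠ 0 := by linarith
    have hQ : Real.log R ^ (1-γ) ≠ 0 := by
      intro h0
      apply hG
      simp only [hGdef, h0, mul_zero]
    simp only [hGdef]
    field_simp
    rfl
  have hfin : Tendsto (fun R => 1 - ((1/R) * I R) / φ R) atTop (nhds 1) := by
    have := (tendsto_const_nhds (x := (1:ℝ))).sub hq'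
    rwa [sub_zero] at this
  refine hfin.congr' ?_
  filter_upwards [eventually_gt_atTop 0, aux_phi_ne γ hγ h hcont hasymp] with R hR0 hφne
  have hdbl := aux_double h hcont hR0.le
  have : (1 / (2*R)) * ∫ x in (0:ℝ)..R, ∫ y in (0:ℝ)..R, h |x - y|
      = φ R - (1/R) * I R := by
    rw [hdbl]
    field_simp
    ring
  rw [this, sub_div, div_self hφne]

end Aux

/-- if `γ < 1` and `h : [0,∞) → ℝ` is continuous with
`h(x) ∼ x⁻¹ (log x)^(-γ)` as `x → ∞`, then
`(1/(2R)) ∫₀^R ∫₀^R h(|x-y|) dx dy ∼ ∫₀^R h(x) dx`, and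
`∫₀^R h(x) dx ∼ (1/(1-γ)) R h(R) (log R) ∼ (1/(1-γ)) (log R)^(1-γ)` as `R → ∞`. -/
theorem statement2 (γ : ℝ) (hγ : γ < 1) (h : ℝ → ℝ)
    (hcont : ContinuousOn h (Set.Ici 0))
    (hasymp : Tendsto (fun x => h x / (x⁻¹ * Real.log x ^ (-γ))) atTop (nhds 1)) :
    Tendsto (fun R =>
        ((1 / (2 * R)) * ∫ x in (0:ℝ)..R, ∫ y in (0:ℝ)..R, h |x - y|) /
          (∫ x in (0:ℝ)..R, h x)) atTop (nhds 1)
    ∧ Tendsto (fun R =>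
        (∫ x in (0:ℝ)..R, h x) / ((1 / (1 - γ)) * R * h R * Real.log R)) atTop (nhds 1)
    ∧ Tendsto (fun R =>
        (∫ x in (0:ℝ)..R, h x) / ((1 / (1 - γ)) * Real.log R ^ (1 - γ))) atTop (nhds 1) :=
  ⟨aux_stmt1 γ hγ h hcont hasymp, aux_stmt2mid γ hγ h hcont hasymp,
    aux_stmt3 γ hγ h hcont hasymp⟩
end

section
/- Let γ < 1 and let K : ℝ → ℝ be even, continuous and positive definite with K(x) ∼ x^{−1} (log x)^{−γ} as x → ∞. Then, as R → ∞, Cap_K([0,R]) ∼ R / (2 ∫₀^R K(x) dx) ∼ (1−γ) / (2 K(R) (log R)). -/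
open Filter MeasureTheory

/-- A kernel `K : ℝ → ℝ` is positive definite if all quadratic forms
`∑ i j, c i * c j * K (x i - x j)` are nonnegative. -/
def IsPosDefKernel1 (K : ℝ → ℝ) : Prop :=
  ∀ (n : ℕ) (x : Fin n → ℝ) (c : Fin n → ℝ),
    0 ≤ ∑ i : Fin n, ∑ j : Fin n, c i * c j * K (x i - x j)

/-- The energy `E_K(μ) = ∫∫ K(x-y) dμ(x) dμ(y)`. -/
noncomputable def energy1 (K : ℝ → ℝ) (μ : Measure ℝ) : ℝ :=
  ∫ x, ∫ y, K (x - y) ∂μ ∂μ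

/-- The capacity of `D` with respect to `K`: the reciprocal of the minimal energy of a
Borel probability measure supported on `D`. -/
noncomputable def capacity1 (K : ℝ → ℝ) (D : Set ℝ) : ℝ :=
  (sInf {e : ℝ | ∃ μ : Measure ℝ, IsProbabilityMeasure μ ∧ μ Dᶜ = 0 ∧ e = energy1 K μ})⁻¹

noncomputable def prim1 (K : ℝ → ℝ) (t : ℝ) : ℝ := ∫ x in (0:ℝ)..t, K x

noncomputable def unif1 (a b : ℝ) : Measure ℝ :=
  (ENNReal.ofReal (b - a))⁻¹ • volume.restrict (Set.Icc a b)

lemma absK_le (K : ℝ → ℝ) (heven : ∀ x, K (-x) = K x) (hpd : IsPosDefKernel1 K) :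
    ∀ x, |K x| ≤ K 0 := by
  intro d
  have h := fun (c : Fin 2 → ℝ) => hpd 2 ![0, d] c
  have h1 := h ![1, 1]
  have h2 := h ![1, -1]
  simp [Fin.sum_univ_two] at h1 h2
  rw [heven] at h1 h2
  rw [abs_le]; constructor <;> nlinarith

lemma K0_nonneg (K : ℝ → ℝ) (heven : ∀ x, K (-x) = K x) (hpd : IsPosDefKernel1 K) :
    0 ≤ K 0 := le_trans (abs_nonneg _) (absK_le K heven hpd 0)

lemma unif1_prob {a b : ℝ} (hab : a < b) : IsProbabilityMeasure (unif1 a b) := by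
  constructor
  rw [unif1, Measure.smul_apply, Measure.restrict_apply MeasurableSet.univ,
    Set.univ_inter, Real.volume_Icc, smul_eq_mul,
    ENNReal.inv_mul_cancel (by simp [sub_pos.2 hab, hab]) ENNReal.ofReal_ne_top]

lemma unif1_compl {a b : ℝ} : unif1 a b (Set.Icc a b)ᶜ = 0 := by
  rw [unif1, Measure.smul_apply, Measure.restrict_apply (measurableSet_Icc.compl),
    Set.compl_inter_self]
  simp

lemma unif1_integral {a b : ℝ} (hab : a < b) (f : ℝ → ℝ) :
    ∫ x, f x ∂(unif1 a b) = (b - a)⁻¹ * ∫ x in a..b, f x := by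
  rw [unif1, integral_smul_measure, intervalIntegral.integral_of_le hab.le,
    ← integral_Icc_eq_integral_Ioc, smul_eq_mul, ENNReal.toReal_inv,
    ENNReal.toReal_ofReal (by linarith)]

lemma prim1_cont {K : ℝ → ℝ} (hcont : Continuous K) : Continuous (prim1 K) :=
  intervalIntegral.continuous_primitive (fun _ _ => hcont.intervalIntegrable _ _) 0

lemma prim1_neg {K : ℝ → ℝ} (heven : ∀ x, K (-x) = K x) (t : ℝ) :
    prim1 K (-t) = - prim1 K t := by
  have : prim1 K (-t) = ∫ x in (0:ℝ)..(-t), K (-x) := by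
    simp only [prim1]; congr 1; ext x; rw [heven]
  rw [this, intervalIntegral.integral_comp_neg, neg_zero, prim1,
    intervalIntegral.integral_symm, neg_neg]

lemma pot_unif {K : ℝ → ℝ} (hcont : Continuous K) {a b : ℝ} (hab : a < b) (x : ℝ) :
    ∫ y, K (x - y) ∂(unif1 a b) = (b - a)⁻¹ * (prim1 K (x - a) - prim1 K (x - b)) := by
  rw [unif1_integral hab, intervalIntegral.integral_comp_sub_left]
  congr 1
  rw [prim1, prim1, ← intervalIntegral.integral_add_adjacent_intervals
    (hcont.intervalIntegrable 0 (x-b)) (hcont.intervalIntegrable (x-b) (x-a))]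
  ring


section Disc
variable {n : ℕ}

lemma comp_fin_eq_sum (idx : ℝ → Fin n) (g : Fin n → ℝ) :
    (fun x => g (idx x)) = fun x => ∑ j : Fin n, (idx ⁻¹' {j}).indicator (fun _ => g j) x := by
  ext x
  rw [Finset.sum_eq_single (idx x)]
  · simp
  · intro b _ hb
    exact Set.indicator_of_notMem (by simp [Ne.symm hb]) _
  · simp

lemma integrable_comp_fin (μ : Measure ℝ) [IsFiniteMeasure μ] (idx : ℝ → Fin n)
    (hidx : Measurable idx) (g : Fin n → ℝ) : Integrable (fun x => g (idx x)) μ := by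
  rw [comp_fin_eq_sum]
  exact integrable_finset_sum _ fun j _ =>
    (integrable_const (g j)).indicator (hidx (MeasurableSet.singleton j))

lemma integral_comp_fin (μ : Measure ℝ) [IsFiniteMeasure μ] (idx : ℝ → Fin n)
    (hidx : Measurable idx) (g : Fin n → ℝ) :
    ∫ x, g (idx x) ∂μ = ∑ j : Fin n, (μ (idx ⁻¹' {j})).toReal * g j := by
  rw [comp_fin_eq_sum idx g, integral_finset_sum]
  · refine Finset.sum_congr rfl fun j _ => ?_
    rw [integral_indicator_const _ (hidx (MeasurableSet.singleton j))]
    simp [mul_comm, measureReal_def]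
  · exact fun j _ => (integrable_const (g j)).indicator (hidx (MeasurableSet.singleton j))

lemma bilin_approx {K : ℝ → ℝ} (hcont : Continuous K) {C : ℝ} (hC : ∀ x, |K x| ≤ C)
    {a b : ℝ} (μ ν : Measure ℝ) [IsProbabilityMeasure μ] [IsProbabilityMeasure ν]
    (hμ : μ (Set.Icc a b)ᶜ = 0) (hν : ν (Set.Icc a b)ᶜ = 0)
    (idx : ℝ → Fin n) (hidx : Measurable idx) (t : Fin n → ℝ)
    {ε : ℝ} (happrox : ∀ x ∈ Set.Icc a b, ∀ y ∈ Set.Icc a b,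
      |K (x - y) - K (t (idx x) - t (idx y))| ≤ ε) :
    |(∫ x, ∫ y, K (x - y) ∂ν ∂μ) -
      ∑ j : Fin n, ∑ k : Fin n,
        (μ (idx ⁻¹' {j})).toReal * (ν (idx ⁻¹' {k})).toReal * K (t j - t k)| ≤ ε := by
  have hμae : ∀ᵐ x ∂μ, x ∈ Set.Icc a b := by
    rw [ae_iff]
    exact hμ
  have hνae : ∀ᵐ y ∂ν, y ∈ Set.Icc a b := by
    rw [ae_iff]
    exact hν
  have hnorm : ∀ z : ℝ, ‖K z‖ ≤ C := fun z => by simpa using hC z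
  have hint1 : ∀ x : ℝ, Integrable (fun y => K (x - y)) ν := fun x =>
    (integrable_const C).mono'
      ((hcont.comp (continuous_const.sub continuous_id)).aestronglyMeasurable)
      (ae_of_all _ fun y => hnorm _)
  have hint2 : ∀ x : ℝ, Integrable (fun y => K (t (idx x) - t (idx y))) ν := fun x =>
    integrable_comp_fin ν idx hidx (fun k => K (t (idx x) - t k))
  set F : ℝ → ℝ := fun x => ∫ y, K (x - y) ∂ν with hF
  set G : ℝ → ℝ := fun x => ∫ y, K (t (idx x) - t (idx y)) ∂ν with hG
  have hFbd : ∀ x, ‖F x‖ ≤ C := by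
    intro x
    refine le_trans (norm_integral_le_integral_norm _) ?_
    calc ∫ y, ‖K (x - y)‖ ∂ν ≤ ∫ _y, C ∂ν :=
          integral_mono_ae (hint1 x).norm (integrable_const C) (ae_of_all _ fun y => hnorm _)
      _ = C := by simp
  have hFcont : Continuous F :=
    continuous_of_dominated
      (fun x => (hcont.comp (continuous_const.sub continuous_id)).aestronglyMeasurable)
      (fun x => ae_of_all _ fun y => hnorm _) (integrable_const C)
      (ae_of_all _ fun y => hcont.comp (continuous_id.sub continuous_const))
  have hFint : Integrable F μ :=
    (integrable_const C).mono' hFcont.aestronglyMeasurable (ae_of_all _ hFbd)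
  have hGeq : G = fun x => (fun j => ∑ k : Fin n, (ν (idx ⁻¹' {k})).toReal * K (t j - t k)) (idx x) := by
    funext x
    exact integral_comp_fin ν idx hidx (fun k => K (t (idx x) - t k))
  have hGint : Integrable G μ := by
    rw [hGeq]
    simpa using integrable_comp_fin μ idx hidx
      (fun j => ∑ k : Fin n, (ν (idx ⁻¹' {k})).toReal * K (t j - t k))
  have hSum : ∫ x, G x ∂μ = ∑ j : Fin n, ∑ k : Fin n,
      (μ (idx ⁻¹' {j})).toReal * (ν (idx ⁻¹' {k})).toReal * K (t j - t k) := by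
    rw [hGeq, integral_comp_fin μ idx hidx]
    refine Finset.sum_congr rfl fun j _ => ?_
    rw [Finset.mul_sum]
    exact Finset.sum_congr rfl fun k _ => by ring
  rw [← hSum, ← integral_sub hFint hGint, ← Real.norm_eq_abs]
  refine le_trans (norm_integral_le_integral_norm _) ?_
  calc ∫ x, ‖F x - G x‖ ∂μ ≤ ∫ _x, ε ∂μ := by
        refine integral_mono_ae (hFint.sub hGint).norm (integrable_const ε) ?_
        filter_upwards [hμae] with x hx
        have : F x - G x = ∫ y, (K (x - y) - K (t (idx x) - t (idx y))) ∂ν :=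
          (integral_sub (hint1 x) (hint2 x)).symm
        rw [this]
        refine le_trans (norm_integral_le_integral_norm _) ?_
        calc ∫ y, ‖K (x - y) - K (t (idx x) - t (idx y))‖ ∂ν ≤ ∫ _y, ε ∂ν := by
              refine integral_mono_ae ((hint1 x).sub (hint2 x)).norm (integrable_const ε) ?_
              filter_upwards [hνae] with y hy
              simpa using happrox x hx y hy
          _ = ε := by simp
    _ = ε := by simp

end Disc

lemma pd_energy {K : ℝ → ℝ} (hcont : Continuous K) (heven : ∀ x, K (-x) = K x)
    (hpd : IsPosDefKernel1 K) {C : ℝ} (hC : ∀ x, |K x| ≤ C) {a b : ℝ} (hab : a < b)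
    (μ ν : Measure ℝ) [IsProbabilityMeasure μ] [IsProbabilityMeasure ν]
    (hμ : μ (Set.Icc a b)ᶜ = 0) (hν : ν (Set.Icc a b)ᶜ = 0) :
    2 * ∫ x, ∫ y, K (x - y) ∂ν ∂μ ≤
      (∫ x, ∫ y, K (x - y) ∂μ ∂μ) + ∫ x, ∫ y, K (x - y) ∂ν ∂ν := by
  have hKsym : ∀ u v : ℝ, K (u - v) = K (v - u) := fun u v => by
    rw [show u - v = -(v - u) by ring, heven]
  refine le_of_forall_pos_le_add fun ε hε => ?_
  obtain ⟨δ, hδ, hδK⟩ := Metric.uniformContinuousOn_iff.1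
    ((isCompact_Icc (a := a - b) (b := b - a)).uniformContinuousOn_of_continuous
      hcont.continuousOn) (ε/4) (by linarith)
  obtain ⟨n, hn⟩ := exists_nat_gt (max 1 (4 * (b - a) / δ))
  have hn0 : 0 < n := by
    have h1 : (1:ℝ) < n := lt_of_le_of_lt (le_max_left 1 _) hn
    have : 1 < n := by exact_mod_cast h1
    omega
  have hba : (0:ℝ) < b - a := by linarith
  set w : ℝ := (b - a) / n with hwdef
  have hw : 0 < w := div_pos hba (by exact_mod_cast hn0)
  have h2w : 2 * w < δ := by
    have h4 : 4 * (b - a) / δ < n := lt_of_le_of_lt (le_max_right 1 _) hn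
    have h5 : 4 * (b - a) < n * δ := by
      rw [div_lt_iff₀ hδ] at h4
      linarith
    have hnpos : (0:ℝ) < n := by exact_mod_cast hn0
    have h6 : w < δ / 2 := by
      rw [hwdef, div_lt_iff₀ hnpos]
      nlinarith
    linarith
  set t : Fin n → ℝ := fun j => a + (j : ℕ) * w with ht
  set idx : ℝ → Fin n := fun x =>
    ⟨min ⌊(x - a) / w⌋₊ (n - 1), lt_of_le_of_lt (min_le_right _ _) (Nat.sub_lt hn0 one_pos)⟩
    with hidxdef
  have hidx : Measurable idx := by
    have hg : Measurable fun x : ℝ => ⌊(x - a) / w⌋₊ :=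
      ((measurable_id.sub_const a).div_const w).nat_floor
    exact (measurable_from_top
      (f := fun m : ℕ => (⟨min m (n - 1),
        lt_of_le_of_lt (min_le_right _ _) (Nat.sub_lt hn0 one_pos)⟩ : Fin n))).comp hg
  have htmem : ∀ j : Fin n, t j ∈ Set.Icc a b := by
    intro j
    constructor
    · have : (0:ℝ) ≤ (j:ℕ) * w := mul_nonneg (by positivity) hw.le
      simp only [ht]; linarith
    · have hj : ((j : ℕ) : ℝ) ≤ (n : ℝ) := by exact_mod_cast (j.2.le)
      have : ((j : ℕ) : ℝ) * w ≤ n * w := by nlinarith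
      have hnw : (n : ℝ) * w = b - a := by
        rw [hwdef]; field_simp
      simp only [ht]; linarith
  have hanch : ∀ x ∈ Set.Icc a b, |x - t (idx x)| ≤ w := by
    intro x hx
    set q : ℝ := (x - a) / w with hq
    have hq0 : 0 ≤ q := div_nonneg (by linarith [hx.1]) hw.le
    have hqn : q ≤ n := by
      rw [hq, div_le_iff₀ hw]
      have hnw : (n : ℝ) * w = b - a := by rw [hwdef]; field_simp
      linarith [hx.2]
    have hxq : x = a + q * w := by rw [hq]; field_simp; ring
    by_cases hm : ⌊q⌋₊ ≤ n - 1
    · have hidxv : ((idx x : Fin n) : ℕ) = ⌊q⌋₊ := by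
        show min ⌊(x - a) / w⌋₊ (n - 1) = ⌊q⌋₊
        rw [← hq]
        exact min_eq_left hm
      have htx : t (idx x) = a + (⌊q⌋₊ : ℝ) * w := by
        simp only [ht]
        rw [hidxv]
      have hfl : (⌊q⌋₊ : ℝ) ≤ q := Nat.floor_le hq0
      have hfu : q < ⌊q⌋₊ + 1 := Nat.lt_floor_add_one q
      rw [htx, abs_le]
      constructor <;> nlinarith
    · have hmn : n ≤ ⌊q⌋₊ := by omega
      have hidxv : ((idx x : Fin n) : ℕ) = n - 1 := by
        show min ⌊(x - a) / w⌋₊ (n - 1) = n - 1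
        rw [← hq]
        exact min_eq_right (by omega : n - 1 ≤ ⌊q⌋₊)
      have hn1 : ((n - 1 : ℕ) : ℝ) = (n : ℝ) - 1 := by
        have h1 : (1:ℕ) ≤ n := hn0
        push_cast [Nat.cast_sub h1]
        ring
      have htx : t (idx x) = a + ((n:ℝ) - 1) * w := by
        simp only [ht]
        rw [hidxv, hn1]
      have hqln : (n : ℝ) ≤ q := le_trans (by exact_mod_cast hmn) (Nat.floor_le hq0)
      rw [htx, abs_le]
      constructor <;> nlinarith [le_antisymm hqn hqln]
  have happrox : ∀ x ∈ Set.Icc a b, ∀ y ∈ Set.Icc a b,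
      |K (x - y) - K (t (idx x) - t (idx y))| ≤ ε/4 := by
    intro x hx y hy
    have hu : x - y ∈ Set.Icc (a - b) (b - a) := by
      constructor <;> [linarith [hx.1, hy.2]; linarith [hx.2, hy.1]]
    have hv : t (idx x) - t (idx y) ∈ Set.Icc (a - b) (b - a) := by
      have h1 := htmem (idx x); have h2 := htmem (idx y)
      constructor <;> [linarith [h1.1, h2.2]; linarith [h1.2, h2.1]]
    have hd : dist (x - y) (t (idx x) - t (idx y)) < δ := by
      rw [Real.dist_eq]
      have h1 := hanch x hx; have h2 := hanch y hy
      rw [abs_le] at h1 h2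
      calc |x - y - (t (idx x) - t (idx y))| ≤ 2 * w := by
            rw [abs_le]; constructor <;> nlinarith [h1.1, h1.2, h2.1, h2.2]
        _ < δ := h2w
    have := hδK _ hu _ hv hd
    rw [Real.dist_eq] at this
    linarith
  set c : Fin n → ℝ := fun j => (μ (idx ⁻¹' {j})).toReal with hc
  set d : Fin n → ℝ := fun j => (ν (idx ⁻¹' {j})).toReal with hd
  set M : Fin n → Fin n → ℝ := fun j k => K (t j - t k) with hM
  have h1 := bilin_approx hcont hC μ μ hμ hμ idx hidx t happrox
  have h2 := bilin_approx hcont hC ν ν hν hν idx hidx t happrox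
  have h3 := bilin_approx hcont hC μ ν hμ hν idx hidx t happrox
  have hQ := hpd n t (fun j => c j - d j)
  have hQexp : ∑ i : Fin n, ∑ j : Fin n, (c i - d i) * (c j - d j) * K (t i - t j)
      = (∑ i : Fin n, ∑ j : Fin n, c i * c j * M i j)
        + (∑ i : Fin n, ∑ j : Fin n, d i * d j * M i j)
        - (∑ i : Fin n, ∑ j : Fin n, c i * d j * M i j)
        - (∑ i : Fin n, ∑ j : Fin n, d i * c j * M i j) := by
    have hpt : ∀ i j : Fin n, (c i - d i) * (c j - d j) * K (t i - t j)
        = c i * c j * M i j + d i * d j * M i j - c i * d j * M i j - d i * c j * M i j := by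
      intro i j
      simp only [hM]
      ring
    simp only [hpt, Finset.sum_sub_distrib, Finset.sum_add_distrib]
  have hsym : (∑ i : Fin n, ∑ j : Fin n, d i * c j * M i j)
      = ∑ i : Fin n, ∑ j : Fin n, c i * d j * M i j := by
    rw [Finset.sum_comm]
    refine Finset.sum_congr rfl fun i _ => Finset.sum_congr rfl fun j _ => ?_
    simp only [hM]
    rw [hKsym (t j) (t i)]
    ring
  rw [hQexp, hsym] at hQ
  simp only [hc, hd, hM] at hQ
  rw [abs_le] at h1 h2 h3
  linarith [h1.1, h1.2, h2.1, h2.2, h3.1, h3.2, hQ]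


lemma tendsto_one_of_forall (f : ℝ → ℝ)
    (h : ∀ ε : ℝ, 0 < ε → ∀ᶠ R in atTop, |f R - 1| ≤ ε) :
    Tendsto f atTop (nhds 1) := by
  rw [Metric.tendsto_atTop]
  intro ε hε
  obtain ⟨N, hN⟩ := eventually_atTop.1 (h (ε/2) (by linarith))
  refine ⟨N, fun n hn => ?_⟩
  rw [Real.dist_eq]
  exact lt_of_le_of_lt (hN n hn) (by linarith)

section Asymp
variable {γ : ℝ} {K : ℝ → ℝ}

lemma P_tendsto (hγ : γ < 1) :
    Tendsto (fun R : ℝ => Real.log R ^ (1 - γ)) atTop atTop :=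
  (tendsto_rpow_atTop (by linarith)).comp Real.tendsto_log_atTop

lemma prim_asymp (hγ : γ < 1) (hcont : Continuous K)
    (hasymp : Tendsto (fun x => K x / (x⁻¹ * Real.log x ^ (-γ))) atTop (nhds 1)) :
    Tendsto (fun R => (1 - γ) * prim1 K R / Real.log R ^ (1 - γ)) atTop (nhds 1) := by
  set g : ℝ → ℝ := fun x => x⁻¹ * Real.log x ^ (-γ) with hg
  have hγ0 : (0:ℝ) < 1 - γ := by linarith
  have hgpos : ∀ x : ℝ, 3 ≤ x → 0 < g x := by
    intro x hx
    have hx0 : (0:ℝ) < x := by linarith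
    have hlx : 0 < Real.log x := Real.log_pos (by linarith)
    exact mul_pos (inv_pos.2 hx0) (Real.rpow_pos_of_pos hlx _)
  have hgcont : ContinuousOn g (Set.Ici (3:ℝ)) := by
    intro x hx
    have hx3 : (3:ℝ) ≤ x := hx
    have hx0 : x ≠ 0 := by intro h; rw [h] at hx3; linarith
    have hlx : Real.log x ≠ 0 := ne_of_gt (Real.log_pos (by linarith))
    exact ((continuousAt_id.inv₀ hx0).mul
      ((Real.continuousAt_log hx0).rpow_const (Or.inl hlx))).continuousWithinAt
  have hKg : ∀ ε : ℝ, 0 < ε → ∀ᶠ x in atTop, |K x - g x| ≤ ε * g x := by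
    intro ε hε
    have h1 : ∀ᶠ x in atTop, |K x / g x - 1| ≤ ε := by
      have := Metric.tendsto_nhds.1 hasymp ε hε
      filter_upwards [this] with x hx
      rw [Real.dist_eq] at hx
      exact hx.le
    filter_upwards [h1, eventually_ge_atTop (3:ℝ)] with x hx h3
    have hgx := hgpos x h3
    have : K x - g x = (K x / g x - 1) * g x := by
      field_simp
    rw [this, abs_mul, abs_of_pos hgx]
    exact mul_le_mul_of_nonneg_right hx hgx.le
  -- FTC
  have hderiv : ∀ u : ℝ, 3 ≤ u →
      HasDerivAt (fun y => Real.log y ^ (1 - γ) / (1 - γ)) (g u) u := by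
    intro u hu
    have hu0 : u ≠ 0 := by intro h; rw [h] at hu; linarith
    have hlu : 0 < Real.log u := Real.log_pos (by linarith)
    have hlog : HasDerivAt Real.log u⁻¹ u := Real.hasDerivAt_log hu0
    have hr : HasDerivAt (fun z : ℝ => z ^ (1 - γ))
        ((1 - γ) * Real.log u ^ (1 - γ - 1)) (Real.log u) :=
      Real.hasDerivAt_rpow_const (Or.inl (ne_of_gt hlu))
    have hcomp := (hr.comp u hlog).div_const (1 - γ)
    refine hcomp.congr_deriv ?_
    rw [hg]
    rw [show (1 : ℝ) - γ - 1 = -γ by ring]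
    field_simp
  have hginteg : ∀ x₁ R : ℝ, 3 ≤ x₁ → x₁ ≤ R → IntervalIntegrable g volume x₁ R := by
    intro x₁ R h3 hR
    refine (hgcont.mono ?_).intervalIntegrable
    rw [Set.uIcc_of_le hR]
    exact fun u hu => le_trans h3 hu.1
  have hgint : ∀ x₁ R : ℝ, 3 ≤ x₁ → x₁ ≤ R →
      ∫ u in x₁..R, g u =
        Real.log R ^ (1 - γ) / (1 - γ) - Real.log x₁ ^ (1 - γ) / (1 - γ) := by
    intro x₁ R h3 hR
    refine intervalIntegral.integral_eq_sub_of_hasDerivAt (fun u hu => hderiv u ?_)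
      (hginteg x₁ R h3 hR)
    rw [Set.uIcc_of_le hR] at hu
    linarith [hu.1]
  refine tendsto_one_of_forall _ fun ε hε => ?_
  set ε' := ε / 2 with hε'
  have hε'0 : 0 < ε' := by rw [hε']; linarith
  obtain ⟨x₂, hx₂⟩ := eventually_atTop.1 (hKg ε' hε'0)
  set x₁ := max x₂ 3 with hx₁
  have h3 : (3:ℝ) ≤ x₁ := le_max_right _ _
  set P : ℝ → ℝ := fun R => Real.log R ^ (1 - γ) with hP
  have hPmono : ∀ R, x₁ ≤ R → P x₁ ≤ P R := by
    intro R hR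
    exact Real.rpow_le_rpow (Real.log_nonneg (by linarith))
      (Real.log_le_log (by linarith) hR) hγ0.le
  have hPx₁ : 0 ≤ P x₁ := Real.rpow_nonneg (Real.log_nonneg (by linarith)) _
  set C₁ := (1 - γ) * |prim1 K x₁| + P x₁ with hC₁
  have hkey : ∀ R, x₁ ≤ R → |(1 - γ) * prim1 K R - P R| ≤ C₁ + ε' * P R := by
    intro R hR
    have hsplit : prim1 K R = prim1 K x₁ + ∫ u in x₁..R, K u := by
      rw [prim1, prim1, intervalIntegral.integral_add_adjacent_intervals
        (hcont.intervalIntegrable 0 x₁) (hcont.intervalIntegrable x₁ R)]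
    have hgeq := hgint x₁ R h3 hR
    have hKint : IntervalIntegrable K volume x₁ R := hcont.intervalIntegrable x₁ R
    have hgI := hginteg x₁ R h3 hR
    have hup : ∫ u in x₁..R, K u ≤ (1 + ε') * ∫ u in x₁..R, g u := by
      rw [← intervalIntegral.integral_const_mul]
      refine intervalIntegral.integral_mono_on hR hKint (hgI.const_mul (1 + ε')) fun u hu => ?_
      have := hx₂ u (le_trans (le_max_left _ _) hu.1)
      rw [abs_le] at this
      linarith [this.2]
    have hlo : (1 - ε') * ∫ u in x₁..R, g u ≤ ∫ u in x₁..R, K u := by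
      rw [← intervalIntegral.integral_const_mul]
      refine intervalIntegral.integral_mono_on hR (hgI.const_mul (1 - ε')) hKint fun u hu => ?_
      have := hx₂ u (le_trans (le_max_left _ _) hu.1)
      rw [abs_le] at this
      linarith [this.1]
    have hPP : (0:ℝ) ≤ P R - P x₁ := by linarith [hPmono R hR]
    have hJ : (1 - γ) * ∫ u in x₁..R, g u = P R - P x₁ := by
      rw [hgeq]
      field_simp
      rfl
    have hu2 : (1 - γ) * (∫ u in x₁..R, K u) ≤ (P R - P x₁) + ε' * (P R - P x₁) := by
      calc (1 - γ) * (∫ u in x₁..R, K u)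
          ≤ (1 - γ) * ((1 + ε') * ∫ u in x₁..R, g u) :=
            mul_le_mul_of_nonneg_left hup hγ0.le
        _ = (1 + ε') * ((1 - γ) * ∫ u in x₁..R, g u) := by ring
        _ = (P R - P x₁) + ε' * (P R - P x₁) := by rw [hJ]; ring
    have hl2 : (P R - P x₁) - ε' * (P R - P x₁) ≤ (1 - γ) * (∫ u in x₁..R, K u) := by
      calc (P R - P x₁) - ε' * (P R - P x₁)
          = (1 - ε') * ((1 - γ) * ∫ u in x₁..R, g u) := by rw [hJ]; ring
        _ = (1 - γ) * ((1 - ε') * ∫ u in x₁..R, g u) := by ring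
        _ ≤ (1 - γ) * (∫ u in x₁..R, K u) := mul_le_mul_of_nonneg_left hlo hγ0.le
    have habs : |(1 - γ) * (∫ u in x₁..R, K u) - (P R - P x₁)| ≤ ε' * (P R - P x₁) := by
      rw [abs_le]
      constructor <;> linarith
    rw [hsplit]
    rw [abs_le] at habs ⊢
    have h1 := abs_nonneg (prim1 K x₁)
    have h2 := neg_abs_le (prim1 K x₁)
    have h3' := le_abs_self (prim1 K x₁)
    constructor <;> nlinarith [hε'0.le, hPx₁]
  have hPtop := P_tendsto (γ := γ) hγ
  have hev : ∀ᶠ R in atTop, x₁ ≤ R ∧ C₁ / ε' ≤ P R ∧ 1 ≤ P R := by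
    filter_upwards [eventually_ge_atTop x₁, hPtop.eventually_ge_atTop (C₁ / ε'),
      hPtop.eventually_ge_atTop 1] with R h1 h2 h3
    exact ⟨h1, h2, h3⟩
  filter_upwards [hev] with R ⟨hR1, hR2, hR3⟩
  have hPpos : 0 < P R := lt_of_lt_of_le one_pos hR3
  have hkey' := hkey R hR1
  have hC₁P : C₁ ≤ ε' * P R := by
    rw [div_le_iff₀ hε'0] at hR2
    linarith
  have : |(1 - γ) * prim1 K R - P R| ≤ 2 * ε' * P R := by
    calc |(1 - γ) * prim1 K R - P R| ≤ C₁ + ε' * P R := hkey'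
      _ ≤ 2 * ε' * P R := by linarith
  have heq : (1 - γ) * prim1 K R / P R - 1 = ((1 - γ) * prim1 K R - P R) / P R := by
    field_simp
  rw [heq, abs_div, abs_of_pos hPpos]
  calc |(1 - γ) * prim1 K R - P R| / P R ≤ (2 * ε' * P R) / P R :=
        div_le_div_of_nonneg_right this hPpos.le
    _ = ε := by
        rw [mul_div_assoc, div_self hPpos.ne', mul_one, hε']
        ring

lemma K_event_pos (hasymp : Tendsto (fun x => K x / (x⁻¹ * Real.log x ^ (-γ))) atTop (nhds 1)) :
    ∀ᶠ x in atTop, 0 < K x := by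
  have h1 : ∀ᶠ x in atTop, |K x / (x⁻¹ * Real.log x ^ (-γ)) - 1| ≤ 1/2 := by
    have := Metric.tendsto_nhds.1 hasymp (1/2) (by norm_num)
    filter_upwards [this] with x hx
    rw [Real.dist_eq] at hx
    exact hx.le
  filter_upwards [h1, eventually_ge_atTop (3:ℝ)] with x hx h3
  have hx0 : (0:ℝ) < x := by linarith
  have hgx : 0 < x⁻¹ * Real.log x ^ (-γ) :=
    mul_pos (inv_pos.2 hx0) (Real.rpow_pos_of_pos (Real.log_pos (by linarith)) _)
  rw [abs_le] at hx
  have h12 : (1:ℝ)/2 ≤ K x / (x⁻¹ * Real.log x ^ (-γ)) := by linarith [hx.1]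
  rw [le_div_iff₀ hgx] at h12
  nlinarith [hgx]

lemma prim_tendsto (hγ : γ < 1) (hcont : Continuous K)
    (hasymp : Tendsto (fun x => K x / (x⁻¹ * Real.log x ^ (-γ))) atTop (nhds 1)) :
    Tendsto (prim1 K) atTop atTop := by
  have h1 := prim_asymp hγ hcont hasymp
  have h2 : Tendsto (fun R : ℝ => Real.log R ^ (1-γ) / (1 - γ)) atTop atTop :=
    (P_tendsto hγ).atTop_div_const (by linarith)
  have h3 := h1.pos_mul_atTop one_pos h2
  refine h3.congr' ?_
  filter_upwards [eventually_gt_atTop (1:ℝ)] with R hR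
  have hP : Real.log R ^ (1-γ) ≠ 0 := ne_of_gt (Real.rpow_pos_of_pos (Real.log_pos hR) _)
  have hne : (1:ℝ) - γ ≠ 0 := by intro h; rw [sub_eq_zero] at h; exact absurd h.symm (ne_of_lt hγ)
  field_simp

lemma prim_ratio (hγ : γ < 1) (hcont : Continuous K)
    (hasymp : Tendsto (fun x => K x / (x⁻¹ * Real.log x ^ (-γ))) atTop (nhds 1))
    {c : ℝ} (hc : 0 < c) :
    Tendsto (fun R => prim1 K (c * R) / prim1 K R) atTop (nhds 1) := by
  have hmul : Tendsto (fun R : ℝ => c * R) atTop atTop :=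
    Tendsto.const_mul_atTop hc tendsto_id
  have h1 := prim_asymp hγ hcont hasymp
  have h1c : Tendsto (fun R => (1 - γ) * prim1 K (c * R) / Real.log (c * R) ^ (1 - γ))
      atTop (nhds 1) := h1.comp hmul
  have hlog : Tendsto (fun R => Real.log (c * R) / Real.log R) atTop (nhds 1) := by
    have heq : (fun R : ℝ => Real.log c / Real.log R + 1)
        =ᶠ[atTop] fun R => Real.log (c * R) / Real.log R := by
      filter_upwards [eventually_gt_atTop (1:ℝ)] with R hR
      have hR0 : (0:ℝ) < R := by linarith
      have hlR : Real.log R ≠ 0 := ne_of_gt (Real.log_pos hR)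
      rw [Real.log_mul (ne_of_gt hc) (ne_of_gt hR0)]
      field_simp
    have h0 : Tendsto (fun R : ℝ => Real.log c / Real.log R) atTop (nhds 0) :=
      tendsto_const_nhds.div_atTop Real.tendsto_log_atTop
    have h0' : Tendsto (fun R : ℝ => Real.log c / Real.log R + 1) atTop (nhds (0 + 1)) :=
      h0.add tendsto_const_nhds
    rw [zero_add] at h0'
    exact h0'.congr' heq
  have hPratio : Tendsto (fun R => Real.log (c * R) ^ (1 - γ) / Real.log R ^ (1 - γ))
      atTop (nhds 1) := by
    have hcont1 : ContinuousAt (fun z : ℝ => z ^ (1 - γ)) 1 :=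
      Real.continuousAt_rpow_const 1 _ (Or.inl one_ne_zero)
    have h2 := hcont1.tendsto.comp hlog
    rw [Real.one_rpow] at h2
    refine h2.congr' ?_
    filter_upwards [eventually_ge_atTop (max 1 (1/c))] with R hR
    have hR1 : (1:ℝ) ≤ R := le_trans (le_max_left _ _) hR
    have hcR : (1:ℝ) ≤ c * R := by
      have h1c' : 1/c ≤ R := le_trans (le_max_right _ _) hR
      rw [div_le_iff₀ hc] at h1c'
      nlinarith
    simp only [Function.comp]
    rw [Real.div_rpow (Real.log_nonneg hcR) (Real.log_nonneg hR1)]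
  have hprim := prim_tendsto hγ hcont hasymp
  have hne : (1:ℝ) - γ ≠ 0 := by intro h; rw [sub_eq_zero] at h; exact absurd h.symm (ne_of_lt hγ)
  have hfinal := (h1c.mul hPratio).div h1 one_ne_zero
  rw [mul_one, div_one] at hfinal
  refine hfinal.congr' ?_
  filter_upwards [eventually_gt_atTop (max 1 (1/c)), hprim.eventually_ge_atTop 1]
    with R hR hprimR
  have hR1 : (1:ℝ) < R := lt_of_le_of_lt (le_max_left _ _) hR
  have hcR : (1:ℝ) < c * R := by
    have h1c' : 1/c < R := lt_of_le_of_lt (le_max_right _ _) hR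
    rw [div_lt_iff₀ hc] at h1c'
    nlinarith
  have hP1 : Real.log R ^ (1-γ) ≠ 0 := ne_of_gt (Real.rpow_pos_of_pos (Real.log_pos hR1) _)
  have hP2 : Real.log (c*R) ^ (1-γ) ≠ 0 := ne_of_gt (Real.rpow_pos_of_pos (Real.log_pos hcR) _)
  have hprimne : prim1 K R ≠ 0 := by linarith
  simp only [Pi.div_apply]
  field_simp

lemma prim_KR (hγ : γ < 1) (hcont : Continuous K)
    (hasymp : Tendsto (fun x => K x / (x⁻¹ * Real.log x ^ (-γ))) atTop (nhds 1)) :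
    Tendsto (fun R => (1 - γ) * prim1 K R / (R * K R * Real.log R)) atTop (nhds 1) := by
  have h1 := prim_asymp hγ hcont hasymp
  have h2 : Tendsto (fun R => (K R / (R⁻¹ * Real.log R ^ (-γ)))⁻¹) atTop (nhds 1) := by
    simpa using hasymp.inv₀ one_ne_zero
  have h3 := h1.mul h2
  rw [mul_one] at h3
  refine h3.congr' ?_
  filter_upwards [eventually_gt_atTop (1:ℝ), K_event_pos hasymp] with R hR hKR
  have hR0 : (0:ℝ) < R := by linarith
  have hlR : 0 < Real.log R := Real.log_pos hR
  have hL : 0 < Real.log R ^ (-γ) := Real.rpow_pos_of_pos hlR _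
  have hPsplit : Real.log R ^ (1 - γ) = Real.log R * Real.log R ^ (-γ) := by
    rw [show (1:ℝ) - γ = 1 + (-γ) by ring, Real.rpow_add hlR, Real.rpow_one]
  rw [hPsplit, inv_div]
  field_simp

end Asymp

lemma integrable_of_support {μ : Measure ℝ} [IsProbabilityMeasure μ] {a b : ℝ}
    (hμ : μ (Set.Icc a b)ᶜ = 0) {f : ℝ → ℝ} (hf : Continuous f) : Integrable f μ := by
  obtain ⟨M, hM⟩ := (isCompact_Icc (a := a) (b := b)).exists_bound_of_continuousOn
    hf.continuousOn
  refine (integrable_const M).mono' hf.aestronglyMeasurable ?_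
  have hae : ∀ᵐ x ∂μ, x ∈ Set.Icc a b := by rw [ae_iff]; exact hμ
  filter_upwards [hae] with x hx
  exact hM x hx

lemma integral_le_on {μ : Measure ℝ} [IsProbabilityMeasure μ] {a b : ℝ}
    (hμ : μ (Set.Icc a b)ᶜ = 0) {f : ℝ → ℝ} (hf : Continuous f) {B : ℝ}
    (h : ∀ x ∈ Set.Icc a b, f x ≤ B) : ∫ x, f x ∂μ ≤ B := by
  have hae : ∀ᵐ x ∂μ, x ∈ Set.Icc a b := by rw [ae_iff]; exact hμ
  calc ∫ x, f x ∂μ ≤ ∫ _x, B ∂μ :=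
        integral_mono_ae (integrable_of_support hμ hf) (integrable_const B)
          (by filter_upwards [hae] with x hx; exact h x hx)
    _ = B := by simp

lemma le_integral_on {μ : Measure ℝ} [IsProbabilityMeasure μ] {a b : ℝ}
    (hμ : μ (Set.Icc a b)ᶜ = 0) {f : ℝ → ℝ} (hf : Continuous f) {B : ℝ}
    (h : ∀ x ∈ Set.Icc a b, B ≤ f x) : B ≤ ∫ x, f x ∂μ := by
  have hae : ∀ᵐ x ∂μ, x ∈ Set.Icc a b := by rw [ae_iff]; exact hμ
  calc B = ∫ _x, B ∂μ := by simp
    _ ≤ ∫ x, f x ∂μ :=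
        integral_mono_ae (integrable_const B) (integrable_of_support hμ hf)
          (by filter_upwards [hae] with x hx; exact h x hx)


set_option maxHeartbeats 1000000 in
/-- if `γ < 1` and `K : ℝ → ℝ` is even, continuous, positive definite with
`K(x) ∼ x⁻¹ (log x)^(-γ)` as `x → ∞`, then
`Cap_K([0,R]) ∼ R / (2 ∫₀^R K(x) dx) ∼ (1-γ) / (2 K(R) log R)` as `R → ∞`. -/
theorem statement8 (γ : ℝ) (hγ : γ < 1) (K : ℝ → ℝ)
    (heven : ∀ x, K (-x) = K x) (hcont : Continuous K) (hpd : IsPosDefKernel1 K)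
    (hasymp : Tendsto (fun x => K x / (x⁻¹ * Real.log x ^ (-γ))) atTop (nhds 1)) :
    Tendsto (fun R =>
        capacity1 K (Set.Icc 0 R) / (R / (2 * ∫ x in (0:ℝ)..R, K x))) atTop (nhds 1)
    ∧ Tendsto (fun R =>
        capacity1 K (Set.Icc 0 R) / ((1 - γ) / (2 * K R * Real.log R))) atTop (nhds 1) := by
  have hC0 := absK_le K heven hpd
  have hK0 : 0 ≤ K 0 := K0_nonneg K heven hpd
  obtain ⟨x₀, hx₀3, hx₀⟩ : ∃ x₀ : ℝ, 3 ≤ x₀ ∧ ∀ x, x₀ ≤ x → 0 < K x := by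
    obtain ⟨x₀', h⟩ := eventually_atTop.1 (K_event_pos hasymp)
    exact ⟨max x₀' 3, le_max_right _ _, fun x hx => h x (le_trans (le_max_left _ _) hx)⟩
  have hx₀pos : (0:ℝ) < x₀ := by linarith
  set C : ℝ := K 0 * x₀ with hCdef
  have hCnn : 0 ≤ C := mul_nonneg hK0 hx₀pos.le
  have hIsmall : ∀ t : ℝ, 0 ≤ t → t ≤ x₀ → |prim1 K t| ≤ C := by
    intro t ht0 htx
    have h1 : ‖∫ x in (0:ℝ)..t, K x‖ ≤ K 0 * |t - 0| :=
      intervalIntegral.norm_integral_le_of_norm_le_const fun x _ => by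
        simpa using hC0 x
    rw [sub_zero, abs_of_nonneg ht0] at h1
    have h2 : |prim1 K t| ≤ K 0 * t := by
      rw [prim1, ← Real.norm_eq_abs]
      exact h1
    calc |prim1 K t| ≤ K 0 * t := h2
      _ ≤ K 0 * x₀ := mul_le_mul_of_nonneg_left htx hK0
  have hImono : ∀ s t : ℝ, x₀ ≤ s → s ≤ t → prim1 K s ≤ prim1 K t := by
    intro s t hs hst
    have hadd : prim1 K t = prim1 K s + ∫ u in s..t, K u := by
      rw [prim1, prim1, intervalIntegral.integral_add_adjacent_intervals
        (hcont.intervalIntegrable 0 s) (hcont.intervalIntegrable s t)]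
    have hnn : 0 ≤ ∫ u in s..t, K u :=
      intervalIntegral.integral_nonneg hst fun u hu => (hx₀ u (le_trans hs hu.1)).le
    linarith [hadd.le, hadd.ge]
  have hIub : ∀ t T : ℝ, 0 ≤ t → t ≤ T → x₀ ≤ T → prim1 K t ≤ prim1 K T + 2*C := by
    intro t T ht0 htT hx₀T
    by_cases h : x₀ ≤ t
    · linarith [hImono t T h htT]
    · push_neg at h
      have h1 := hIsmall t ht0 h.le
      have h2 := hIsmall x₀ hx₀pos.le le_rfl
      have h3 := hImono x₀ T le_rfl hx₀T
      rw [abs_le] at h1 h2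
      linarith [h1.2, h2.1]
  have hpot : ∀ a b : ℝ, a < b → ∀ μ : Measure ℝ,
      (∫ x, ∫ y, K (x - y) ∂(unif1 a b) ∂μ)
        = ∫ x, (b - a)⁻¹ * (prim1 K (x - a) + prim1 K (b - x)) ∂μ := by
    intro a b hab μ
    refine integral_congr_ae (ae_of_all _ fun x => ?_)
    show (∫ y, K (x - y) ∂(unif1 a b)) = (b - a)⁻¹ * (prim1 K (x - a) + prim1 K (b - x))
    rw [pot_unif hcont hab x, show x - b = -(b - x) by ring, prim1_neg heven]
    ring
  have hpotcont : ∀ a b : ℝ,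
      Continuous fun x => (b - a)⁻¹ * (prim1 K (x - a) + prim1 K (b - x)) := by
    intro a b
    exact continuous_const.mul
      (((prim1_cont hcont).comp (continuous_id.sub continuous_const)).add
        ((prim1_cont hcont).comp (continuous_const.sub continuous_id)))
  have hEgen : ∀ a b : ℝ, a < b → x₀ ≤ b - a →
      energy1 K (unif1 a b) ≤ (2 * prim1 K (b - a) + 4*C) / (b - a) := by
    intro a b hab hx₀ab
    haveI := unif1_prob hab
    have hba : (0:ℝ) < b - a := by linarith
    show (∫ x, ∫ y, K (x - y) ∂(unif1 a b) ∂(unif1 a b)) ≤ _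
    rw [hpot a b hab]
    refine integral_le_on unif1_compl (hpotcont a b) fun x hx => ?_
    have h1 : prim1 K (x - a) ≤ prim1 K (b - a) + 2*C :=
      hIub (x - a) (b - a) (by linarith [hx.1]) (by linarith [hx.2]) hx₀ab
    have h2 : prim1 K (b - x) ≤ prim1 K (b - a) + 2*C :=
      hIub (b - x) (b - a) (by linarith [hx.2]) (by linarith [hx.1]) hx₀ab
    calc (b - a)⁻¹ * (prim1 K (x - a) + prim1 K (b - x))
        ≤ (b - a)⁻¹ * (2 * prim1 K (b - a) + 4*C) :=
          mul_le_mul_of_nonneg_left (by linarith) (inv_nonneg.2 hba.le)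
      _ = (2 * prim1 K (b - a) + 4*C) / (b - a) := by rw [inv_mul_eq_div]
  have hmain : ∀ δ : ℝ, 0 < δ → δ ≤ 1 → ∀ R : ℝ, x₀ ≤ δ * R →
      sInf {e : ℝ | ∃ μ : Measure ℝ, IsProbabilityMeasure μ ∧ μ (Set.Icc 0 R)ᶜ = 0
          ∧ e = energy1 K μ} ≤ (2 * prim1 K R + 4*C) / R ∧
      (4 * prim1 K (δ*R) - 2 * prim1 K ((1+2*δ)*R) - 4*C) / ((1+2*δ)*R) ≤
        sInf {e : ℝ | ∃ μ : Measure ℝ, IsProbabilityMeasure μ ∧ μ (Set.Icc 0 R)ᶜ = 0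
          ∧ e = energy1 K μ} := by
    intro δ hδ0 hδ1 R hδR
    have hδRpos : 0 < δ * R := lt_of_lt_of_le hx₀pos hδR
    have hRpos : 0 < R := by nlinarith
    have hδRR : δ * R ≤ R := by nlinarith
    have hx₀R : x₀ ≤ R := le_trans hδR hδRR
    set a : ℝ := -(δ*R) with ha
    set b : ℝ := R + δ*R with hb
    have hab : a < b := by rw [ha, hb]; linarith
    have hba : b - a = (1+2*δ)*R := by rw [ha, hb]; ring
    have hbapos : 0 < b - a := by rw [hba]; positivity
    haveI hμRi : IsProbabilityMeasure (unif1 0 R) := unif1_prob hRpos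
    haveI hνP : IsProbabilityMeasure (unif1 a b) := unif1_prob hab
    have hEup : energy1 K (unif1 0 R) ≤ (2 * prim1 K R + 4*C) / R := by
      have := hEgen 0 R hRpos (by simpa using hx₀R)
      simpa using this
    have hmem : energy1 K (unif1 0 R) ∈ {e : ℝ | ∃ μ : Measure ℝ, IsProbabilityMeasure μ ∧
        μ (Set.Icc 0 R)ᶜ = 0 ∧ e = energy1 K μ} := ⟨unif1 0 R, hμRi, unif1_compl, rfl⟩
    have hLB : ∀ e ∈ {e : ℝ | ∃ μ : Measure ℝ, IsProbabilityMeasure μ ∧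
        μ (Set.Icc 0 R)ᶜ = 0 ∧ e = energy1 K μ},
        (4 * prim1 K (δ*R) - 2 * prim1 K ((1+2*δ)*R) - 4*C) / ((1+2*δ)*R) ≤ e := by
      rintro e ⟨μ, hμp, hμc, rfl⟩
      haveI := hμp
      have hsub : Set.Icc (0:ℝ) R ⊆ Set.Icc a b :=
        Set.Icc_subset_Icc (by rw [ha]; linarith) (by rw [hb]; linarith)
      have hμc' : μ (Set.Icc a b)ᶜ = 0 :=
        measure_mono_null (Set.compl_subset_compl.2 hsub) hμc
      have hpd2 := pd_energy hcont heven hpd hC0 hab μ (unif1 a b) hμc' unif1_compl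
      have hBlow : (2 * prim1 K (δ*R)) / (b - a) ≤ ∫ x, ∫ y, K (x - y) ∂(unif1 a b) ∂μ := by
        rw [hpot a b hab μ]
        refine le_integral_on hμc (hpotcont a b) fun x hx => ?_
        have h1 : prim1 K (δ*R) ≤ prim1 K (x - a) :=
          hImono _ _ hδR (by rw [ha]; linarith [hx.1])
        have h2 : prim1 K (δ*R) ≤ prim1 K (b - x) :=
          hImono _ _ hδR (by rw [hb]; linarith [hx.2])
        have heq : (2 * prim1 K (δ*R)) / (b - a)
            = (b - a)⁻¹ * (prim1 K (δ*R) + prim1 K (δ*R)) := by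
          rw [inv_mul_eq_div]
          ring
        rw [heq]
        exact mul_le_mul_of_nonneg_left (by linarith) (inv_nonneg.2 hbapos.le)
      have hEν : (∫ x, ∫ y, K (x - y) ∂(unif1 a b) ∂(unif1 a b))
          ≤ (2 * prim1 K (b - a) + 4*C) / (b - a) :=
        hEgen a b hab (by rw [hba]; nlinarith)
      have hcomb : (4 * prim1 K (δ*R) - 2 * prim1 K ((1+2*δ)*R) - 4*C) / ((1+2*δ)*R)
          = 2 * ((2 * prim1 K (δ*R)) / (b - a)) - (2 * prim1 K (b - a) + 4*C)/(b - a) := by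
        rw [hba]
        ring
      show _ ≤ ∫ x, ∫ y, K (x - y) ∂μ ∂μ
      rw [hcomb]
      linarith [hpd2, hEν, hBlow]
    have hbdd : BddBelow {e : ℝ | ∃ μ : Measure ℝ, IsProbabilityMeasure μ ∧
        μ (Set.Icc 0 R)ᶜ = 0 ∧ e = energy1 K μ} := ⟨_, hLB⟩
    exact ⟨le_trans (csInf_le hbdd hmem) hEup, le_csInf ⟨_, hmem⟩ hLB⟩
  have hIat : Tendsto (prim1 K) atTop atTop := prim_tendsto hγ hcont hasymp
  have T1 : Tendsto (fun R => sInf {e : ℝ | ∃ μ : Measure ℝ, IsProbabilityMeasure μ ∧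
      μ (Set.Icc 0 R)ᶜ = 0 ∧ e = energy1 K μ} * (R / (2 * prim1 K R))) atTop (nhds 1) := by
    refine tendsto_one_of_forall _ fun ε₀ hε₀ => ?_
    set ε := min ε₀ 1 with hεdef
    have hε : 0 < ε := lt_min hε₀ one_pos
    have hε1 : ε ≤ 1 := min_le_right _ _
    have hεε₀ : ε ≤ ε₀ := min_le_left _ _
    set δ := min (ε/8) (1/2) with hδdef
    have hδ0 : 0 < δ := lt_min (by linarith) (by norm_num)
    have hδ1 : δ ≤ 1 := le_trans (min_le_right _ _) (by norm_num)
    have hδε : δ ≤ ε/8 := min_le_left _ _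
    have hr1 := prim_ratio hγ hcont hasymp hδ0
    have hr2 := prim_ratio hγ hcont hasymp (show (0:ℝ) < 1+2*δ by linarith)
    have hq1 : ∀ᶠ R in atTop, |prim1 K (δ*R)/prim1 K R - 1| ≤ ε/16 := by
      have := Metric.tendsto_nhds.1 hr1 (ε/16) (by linarith)
      filter_upwards [this] with R h
      rw [Real.dist_eq] at h
      exact h.le
    have hq2 : ∀ᶠ R in atTop, |prim1 K ((1+2*δ)*R)/prim1 K R - 1| ≤ ε/16 := by
      have := Metric.tendsto_nhds.1 hr2 (ε/16) (by linarith)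
      filter_upwards [this] with R h
      rw [Real.dist_eq] at h
      exact h.le
    filter_upwards [hq1, hq2, eventually_ge_atTop (x₀/δ),
      hIat.eventually_ge_atTop (max 1 (16*C/ε)), eventually_ge_atTop (1:ℝ)]
      with R h1 h2 h3 h4 h5
    have hRpos : (0:ℝ) < R := by linarith
    have hδR : x₀ ≤ δ * R := by
      rw [div_le_iff₀ hδ0] at h3
      linarith [h3]
    obtain ⟨hup, hlo⟩ := hmain δ hδ0 hδ1 R hδR
    have hJ1 : (1:ℝ) ≤ prim1 K R := le_trans (le_max_left _ _) h4
    have hJpos : 0 < prim1 K R := by linarith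
    have hCJ : 16*C/ε ≤ prim1 K R := le_trans (le_max_right _ _) h4
    have hCJ' : 16*C ≤ ε * prim1 K R := by
      rw [div_le_iff₀ hε] at hCJ
      linarith
    have hX₁ : (1 - ε/16) * prim1 K R ≤ prim1 K (δ*R) := by
      rw [abs_le] at h1
      have h' : 1 - ε/16 ≤ prim1 K (δ*R)/prim1 K R := by linarith [h1.1]
      rw [le_div_iff₀ hJpos] at h'
      linarith
    have hX₂ : prim1 K ((1+2*δ)*R) ≤ (1 + ε/16) * prim1 K R := by
      rw [abs_le] at h2
      have h' : prim1 K ((1+2*δ)*R)/prim1 K R ≤ 1 + ε/16 := by linarith [h2.2]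
      rw [div_le_iff₀ hJpos] at h'
      linarith
    have hBpos : 0 < R / (2 * prim1 K R) := by positivity
    have hupB : sInf {e : ℝ | ∃ μ : Measure ℝ, IsProbabilityMeasure μ ∧
        μ (Set.Icc 0 R)ᶜ = 0 ∧ e = energy1 K μ} * (R / (2 * prim1 K R)) ≤ 1 + ε/8 := by
      have h6 := mul_le_mul_of_nonneg_right hup hBpos.le
      have hEq : ((2 * prim1 K R + 4*C)/R) * (R/(2 * prim1 K R)) = 1 + 2*C/prim1 K R := by
        field_simp
        ring
      rw [hEq] at h6
      have h7 : 2*C/prim1 K R ≤ ε/8 := by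
        rw [div_le_iff₀ hJpos]
        linarith
      linarith
    have hloB : 1 - ε ≤ sInf {e : ℝ | ∃ μ : Measure ℝ, IsProbabilityMeasure μ ∧
        μ (Set.Icc 0 R)ᶜ = 0 ∧ e = energy1 K μ} * (R / (2 * prim1 K R)) := by
      have h6 := mul_le_mul_of_nonneg_right hlo hBpos.le
      have hEq2 : ((4 * prim1 K (δ*R) - 2 * prim1 K ((1+2*δ)*R) - 4*C) / ((1+2*δ)*R))
            * (R/(2 * prim1 K R))
          = (4 * prim1 K (δ*R) - 2 * prim1 K ((1+2*δ)*R) - 4*C)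
            / ((1+2*δ) * (2 * prim1 K R)) := by
        have hd1 : ((1+2*δ)*R) * (2 * prim1 K R) ≠ 0 := by positivity
        have hd2 : (1+2*δ) * (2 * prim1 K R) ≠ 0 := by positivity
        rw [div_mul_div_comm, div_eq_div_iff hd1 hd2]
        ring
      rw [hEq2] at h6
      refine le_trans ?_ h6
      rw [le_div_iff₀ (by positivity)]
      nlinarith [hX₁, hX₂, hCJ', hJpos, hδ0, hε, hε1, hδε,
        mul_nonneg (mul_nonneg hδ0.le hε.le) hJpos.le,
        mul_le_mul_of_nonneg_right hδε hJpos.le]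
    rw [abs_le]
    constructor
    · linarith
    · linarith
  have T2aux := prim_KR hγ hcont hasymp
  have T2 : Tendsto (fun R => sInf {e : ℝ | ∃ μ : Measure ℝ, IsProbabilityMeasure μ ∧
      μ (Set.Icc 0 R)ᶜ = 0 ∧ e = energy1 K μ} * ((1-γ)/(2 * K R * Real.log R)))
      atTop (nhds 1) := by
    have h := T1.mul T2aux
    rw [mul_one] at h
    refine h.congr' ?_
    filter_upwards [eventually_gt_atTop (1:ℝ), K_event_pos hasymp,
      hIat.eventually_ge_atTop 1] with R hR hKR hJ
    have hR0 : (0:ℝ) < R := by linarith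
    have hlR : 0 < Real.log R := Real.log_pos hR
    have hJpos : 0 < prim1 K R := by linarith
    field_simp
  constructor
  · have h := T1.inv₀ one_ne_zero
    rw [inv_one] at h
    refine h.congr fun R => ?_
    show (sInf {e : ℝ | ∃ μ : Measure ℝ, IsProbabilityMeasure μ ∧
        μ (Set.Icc 0 R)ᶜ = 0 ∧ e = energy1 K μ} * (R / (2 * prim1 K R)))⁻¹
      = capacity1 K (Set.Icc 0 R) / (R / (2 * ∫ x in (0:ℝ)..R, K x))
    rw [mul_inv, capacity1, div_eq_mul_inv]
    rfl
  · have h := T2.inv₀ one_ne_zero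
    rw [inv_one] at h
    refine h.congr fun R => ?_
    show (sInf {e : ℝ | ∃ μ : Measure ℝ, IsProbabilityMeasure μ ∧
        μ (Set.Icc 0 R)ᶜ = 0 ∧ e = energy1 K μ} * ((1-γ)/(2 * K R * Real.log R)))⁻¹
      = capacity1 K (Set.Icc 0 R) / ((1-γ)/(2 * K R * Real.log R))
    rw [mul_inv, capacity1, div_eq_mul_inv, div_eq_mul_inv]
end

section
/- For every dimension d ≥ 1 there exists a constant c_d ≥ 1, depending only on d, such that for every R₁ ≥ 1 and every R₂ ≥ 2R₁ there exist points z¹₁,…,z¹_n and z²₁,…,z²_n in ℝ^d with n ≤ c_d (R₂/R₁)^d satisfying: (1) for all i, j, the Euclidean distance between z¹_i + A^∞(R₁) and z²_j + A^∞(R₁) is at least (2 − 1/√d)(R₂ − 2R₁); (2) every continuous path γ : [0,1] → ℝ^d that crosses A^∞(R₂) also crosses z¹_i + A^∞(R₁) for some i and crosses z²_j + A^∞(R₁) for some j. -/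
open Filter

/-- The cube `Λ_R = [-R,R]^d ⊂ ℝ^d`. -/
def cubeSet (d : ℕ) (R : ℝ) : Set (EuclideanSpace ℝ (Fin d)) :=
  {x | ∀ i : Fin d, |x i| ≤ R}

/-- The sup-norm annulus `A^∞(R) = Λ_{2R} \ Λ_{R/√d}`. -/
def annulusSet (d : ℕ) (R : ℝ) : Set (EuclideanSpace ℝ (Fin d)) :=
  cubeSet d (2 * R) \ cubeSet d (R / Real.sqrt d)

/-- A set `Γ` (the image of a path) crosses the translated annulus `z + A^∞(R)` if it
intersects both `z + ∂Λ_{R/√d}` and `z + ∂Λ_{2R}`. -/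
def Crosses (d : ℕ) (Γ : Set (EuclideanSpace ℝ (Fin d)))
    (z : EuclideanSpace ℝ (Fin d)) (R : ℝ) : Prop :=
  (Γ ∩ ((fun w => z + w) '' frontier (cubeSet d (R / Real.sqrt d)))).Nonempty ∧
  (Γ ∩ ((fun w => z + w) '' frontier (cubeSet d (2 * R)))).Nonempty

/-! ### Auxiliary material -/

/-- The sup norm on `EuclideanSpace`. -/
noncomputable def supNorm (d : ℕ) (x : EuclideanSpace ℝ (Fin d)) : ℝ :=
  ‖(fun i => x i : Fin d → ℝ)‖

theorem supNorm_cont (d : ℕ) : Continuous (supNorm d) :=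
  continuous_norm.comp (continuous_pi fun i => (continuous_apply i).comp (by fun_prop))

theorem supNorm_le_iff (d : ℕ) (x : EuclideanSpace ℝ (Fin d)) (R : ℝ) (hR : 0 ≤ R) :
    supNorm d x ≤ R ↔ ∀ i, |x i| ≤ R := by
  simp [supNorm, pi_norm_le_iff_of_nonneg hR, Real.norm_eq_abs]

theorem coord_le_supNorm (d : ℕ) (x : EuclideanSpace ℝ (Fin d)) (i : Fin d) :
    |x i| ≤ supNorm d x := by
  simpa [supNorm, Real.norm_eq_abs] using norm_le_pi_norm (fun i => x i : Fin d → ℝ) i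

theorem cube_eq_supNorm (d : ℕ) (R : ℝ) (hR : 0 ≤ R) :
    cubeSet d R = {x | supNorm d x ≤ R} := by
  ext x
  simp [cubeSet, Set.mem_setOf_eq, ← supNorm_le_iff d x R hR]

theorem supNorm_exists (d : ℕ) (hd : 1 ≤ d) (x : EuclideanSpace ℝ (Fin d)) :
    ∃ j, |x j| = supNorm d x := by
  have hne : (Finset.univ : Finset (Fin d)).Nonempty := ⟨⟨0, hd⟩, Finset.mem_univ _⟩
  obtain ⟨j, -, hj⟩ := Finset.exists_mem_eq_sup Finset.univ hne fun i => ‖x i‖₊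
  refine ⟨j, ?_⟩
  have h1 : ‖(fun i => x i : Fin d → ℝ)‖₊ = Finset.univ.sup fun i => ‖x i‖₊ := Pi.nnnorm_def _
  have h2 : ‖(fun i => x i : Fin d → ℝ)‖ = ((Finset.univ.sup fun i => ‖x i‖₊ : NNReal) : ℝ) := by
    rw [← h1]; exact (coe_nnnorm _).symm
  rw [supNorm, h2, hj]; simp [Real.norm_eq_abs]

theorem frontier_cube_supNorm (d : ℕ) (R : ℝ) (hR : 0 ≤ R) :
    ∀ x ∈ frontier (cubeSet d R), supNorm d x = R := by
  intro x hx
  rw [cube_eq_supNorm d R hR] at hx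
  exact frontier_le_subset_eq (supNorm_cont d) continuous_const hx

theorem mem_frontier_cube (d : ℕ) (hd : 1 ≤ d) (x : EuclideanSpace ℝ (Fin d)) (R : ℝ)
    (hR : 0 < R) (hx : supNorm d x = R) : x ∈ frontier (cubeSet d R) := by
  have hcl : IsClosed (cubeSet d R) := by
    rw [cube_eq_supNorm d R hR.le]
    exact isClosed_le (supNorm_cont d) continuous_const
  rw [frontier, hcl.closure_eq]
  refine ⟨by rw [cube_eq_supNorm d R hR.le]; exact le_of_eq hx, ?_⟩
  intro hint
  obtain ⟨j, hj⟩ := supNorm_exists d hd x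
  rw [hx] at hj
  have htend : Filter.Tendsto (fun t : ℝ => x + t • EuclideanSpace.single j (x j))
      (nhds 0) (nhds x) := by
    have hc : Continuous (fun t : ℝ => x + t • EuclideanSpace.single j (x j)) :=
      continuous_const.add (continuous_id.smul continuous_const)
    have := hc.tendsto 0
    simpa using this
  have hnhds : cubeSet d R ∈ nhds x := mem_nhds_iff.mpr ⟨interior (cubeSet d R),
    interior_subset, isOpen_interior, hint⟩
  have hev : ∀ᶠ t in nhdsWithin (0:ℝ) (Set.Ioi 0),
      (x + t • EuclideanSpace.single j (x j)) ∈ cubeSet d R :=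
    Filter.Eventually.filter_mono nhdsWithin_le_nhds (htend.eventually_mem hnhds)
  have hpos : ∀ᶠ t in nhdsWithin (0:ℝ) (Set.Ioi 0), (0:ℝ) < t :=
    eventually_mem_nhdsWithin
  obtain ⟨t, htc, htpos⟩ := (hev.and hpos).exists
  have hcoord : |(x + t • EuclideanSpace.single j (x j)) j| ≤ R := htc j
  have happ : (x + t • EuclideanSpace.single j (x j)) j = x j + t * x j := by
    simp [EuclideanSpace.single_apply]
  rw [happ] at hcoord
  have : |x j + t * x j| = (1 + t) * |x j| := by
    rw [show x j + t * x j = (1 + t) * x j by ring, abs_mul,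
      abs_of_pos (by linarith : (0:ℝ) < 1 + t)]
  rw [this, hj] at hcoord
  nlinarith

theorem coord_le_eucl_norm (d : ℕ) (x : EuclideanSpace ℝ (Fin d)) (i : Fin d) :
    |x i| ≤ ‖x‖ := by
  rw [EuclideanSpace.norm_eq]
  rw [show |x i| = Real.sqrt (‖x i‖^2) by rw [Real.sqrt_sq_eq_abs]; simp [Real.norm_eq_abs]]
  apply Real.sqrt_le_sqrt
  exact Finset.single_le_sum (f := fun j => ‖x j‖^2) (fun j _ => sq_nonneg _) (Finset.mem_univ i)

theorem grid_lemma (δ : ℝ) (hδ : 0 < δ) (K : ℤ) (u B : ℝ) (hu : |u| ≤ B)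
    (hK : B / δ + 1/2 ≤ (K:ℝ)) :
    ∃ k ∈ Finset.Icc (-K) K, |u - (k:ℝ) * δ| ≤ δ / 2 := by
  have hround : |u/δ - (round (u/δ) : ℝ)| ≤ 1/2 := abs_sub_round (u/δ)
  refine ⟨round (u / δ), ?_, ?_⟩
  · have h1 : |(round (u/δ) : ℝ)| ≤ |u/δ| + 1/2 := by
      calc |(round (u/δ) : ℝ)| ≤ |(round (u/δ) : ℝ) - u/δ| + |u/δ| := by
              simpa using abs_add_le ((round (u/δ) : ℝ) - u/δ) (u/δ)
        _ ≤ 1/2 + |u/δ| := by rw [abs_sub_comm] at hround; linarith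
        _ = |u/δ| + 1/2 := by ring
    have h2 : |u/δ| ≤ B/δ := by
      rw [abs_div, abs_of_pos hδ]
      gcongr
    have h3 : |(round (u/δ) : ℝ)| ≤ (K:ℝ) := by linarith
    have h4 : |round (u/δ)| ≤ K := by exact_mod_cast (by push_cast; exact h3 :
      ((|round (u/δ)| : ℤ) : ℝ) ≤ (K:ℝ))
    rw [Finset.mem_Icc]
    exact abs_le.mp h4
  · have heq : u - (round (u/δ) : ℝ) * δ = (u/δ - (round (u/δ):ℝ)) * δ := by
      field_simp
    rw [heq, abs_mul, abs_of_pos hδ]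
    calc |u/δ - (round (u/δ):ℝ)| * δ ≤ (1/2) * δ :=
          mul_le_mul_of_nonneg_right hround hδ.le
      _ = δ / 2 := by ring

theorem clamp_lemma (M c u v : ℝ) (hM : 0 ≤ M) (hu : |u| ≤ M + c) (huv : |u - v| ≤ c) :
    |u - max (-M) (min v M)| ≤ c := by
  rw [abs_le] at *
  rcases le_total v M with h1 | h1 <;> rcases le_total v (-M) with h2 | h2 <;>
    simp [max_def, min_def, h1, h2, *] <;> constructor <;> linarith

theorem surj_lemma {E : Type*} (Z : Finset E) (hZ : Z.Nonempty) (n : ℕ) (hn : Z.card ≤ n) :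
    ∃ f : Fin n → E, (∀ i, f i ∈ Z) ∧ ∀ z ∈ Z, ∃ i, f i = z := by
  classical
  let e := Z.equivFin
  refine ⟨fun i => if h : (i : ℕ) < Z.card then (e.symm ⟨i, h⟩ : E) else hZ.choose, ?_, ?_⟩
  · intro i
    by_cases h : (i:ℕ) < Z.card
    · simp only [h, dif_pos]; exact (e.symm ⟨i, h⟩).2
    · simp only [h, dif_neg, not_false_iff]; exact hZ.choose_spec
  · intro z hz
    refine ⟨⟨(e ⟨z, hz⟩ : ℕ), lt_of_lt_of_le (e ⟨z, hz⟩).2 hn⟩, ?_⟩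
    have h : ((e ⟨z, hz⟩ : ℕ) : ℕ) < Z.card := (e ⟨z, hz⟩).2
    simp only [h, dif_pos]
    simp

theorem crosses_of (d : ℕ) (hd : 1 ≤ d) (γ : ℝ → EuclideanSpace ℝ (Fin d))
    (hγ : ContinuousOn γ (Set.Icc 0 1))
    (t₀ t₁ : ℝ) (ht₀ : t₀ ∈ Set.Icc (0:ℝ) 1) (ht₁ : t₁ ∈ Set.Icc (0:ℝ) 1)
    (z : EuclideanSpace ℝ (Fin d)) (R : ℝ) (hR : 0 < R)
    (h0 : supNorm d (γ t₀ - z) ≤ R / Real.sqrt d)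
    (h1 : 2 * R ≤ supNorm d (γ t₁ - z)) :
    Crosses d (γ '' Set.Icc 0 1) z R := by
  have hσ : 1 ≤ Real.sqrt d := by
    rw [show (1:ℝ) = Real.sqrt 1 from (Real.sqrt_one).symm]
    exact Real.sqrt_le_sqrt (by exact_mod_cast hd)
  have hσ0 : 0 < Real.sqrt d := lt_of_lt_of_le one_pos hσ
  have hRd0 : 0 < R / Real.sqrt d := div_pos hR hσ0
  have hRd : R / Real.sqrt d ≤ 2 * R := (div_le_self hR.le hσ).trans (by linarith)
  have hsub : Set.uIcc t₀ t₁ ⊆ Set.Icc (0:ℝ) 1 :=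
    Set.ordConnected_Icc.uIcc_subset ht₀ ht₁
  set g : ℝ → ℝ := fun t => supNorm d (γ t - z) with hg
  have hgc : ContinuousOn g (Set.uIcc t₀ t₁) :=
    (supNorm_cont d).comp_continuousOn ((hγ.mono hsub).sub continuousOn_const)
  have hivt := intermediate_value_uIcc hgc
  have key : ∀ a : ℝ, 0 < a → g t₀ ≤ a → a ≤ g t₁ →
      ((γ '' Set.Icc 0 1) ∩ ((fun w => z + w) '' frontier (cubeSet d a))).Nonempty := by
    intro a ha hga hga'
    have : a ∈ Set.uIcc (g t₀) (g t₁) := Set.mem_uIcc.mpr (Or.inl ⟨hga, hga'⟩)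
    obtain ⟨t, ht, hgt⟩ := hivt this
    refine ⟨γ t, ⟨t, hsub ht, rfl⟩, ⟨γ t - z, ?_, by simp⟩⟩
    exact mem_frontier_cube d hd _ a ha hgt
  exact ⟨key _ hRd0 h0 (le_trans hRd h1), key _ (by linarith) (le_trans h0 hRd) h1⟩

set_option maxHeartbeats 1000000 in
/-- there is a dimensional constant `c_d ≥ 1` such that for all `R₁ ≥ 1` and
`R₂ ≥ 2R₁` there exist two collections of at most `c_d (R₂/R₁)^d` translated copies of
`A^∞(R₁)`, mutually `(2-1/√d)(R₂-2R₁)`-separated, such that every continuous path crossing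
`A^∞(R₂)` crosses one annulus of each collection. -/
theorem statement14 (d : ℕ) (hd : 1 ≤ d) :
    ∃ c : ℝ, 1 ≤ c ∧ ∀ R₁ : ℝ, 1 ≤ R₁ → ∀ R₂ : ℝ, 2 * R₁ ≤ R₂ →
      ∃ (n : ℕ) (z₁ z₂ : Fin n → EuclideanSpace ℝ (Fin d)),
        (n : ℝ) ≤ c * (R₂ / R₁) ^ d ∧
        (∀ i j : Fin n, ∀ p ∈ (fun w => z₁ i + w) '' annulusSet d R₁,
          ∀ q ∈ (fun w => z₂ j + w) '' annulusSet d R₁,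
            (2 - 1 / Real.sqrt d) * (R₂ - 2 * R₁) ≤ ‖p - q‖) ∧
        (∀ γ : ℝ → EuclideanSpace ℝ (Fin d), ContinuousOn γ (Set.Icc 0 1) →
          Crosses d (γ '' Set.Icc 0 1) 0 R₂ →
            (∃ i, Crosses d (γ '' Set.Icc 0 1) (z₁ i) R₁) ∧
            (∃ j, Crosses d (γ '' Set.Icc 0 1) (z₂ j) R₁)) := by
  classical
  have hd' : (1:ℝ) ≤ (d:ℝ) := by exact_mod_cast hd
  refine ⟨(8 * (d:ℝ)) ^ d, one_le_pow₀ (by linarith), ?_⟩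
  intro R₁ hR₁ R₂ hR₂
  have hσ1 : 1 ≤ Real.sqrt d := by
    rw [show (1:ℝ) = Real.sqrt 1 from (Real.sqrt_one).symm]
    exact Real.sqrt_le_sqrt (by exact_mod_cast hd)
  set σ := Real.sqrt d with hσdef
  have hσ0 : 0 < σ := lt_of_lt_of_le one_pos hσ1
  have hσd : σ ≤ (d:ℝ) := by
    nlinarith [Real.sq_sqrt (show (0:ℝ) ≤ (d:ℝ) by linarith), hσ1]
  have hR₁0 : 0 < R₁ := lt_of_lt_of_le one_pos hR₁
  have hR₂0 : 0 < R₂ := by linarith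
  have hRR : 2 ≤ R₂ / R₁ := (le_div_iff₀ hR₁0).mpr (by linarith)
  have hRR0 : 0 < R₂ / R₁ := by linarith
  set δ := R₁ / σ with hδdef
  have hδ0 : 0 < δ := div_pos hR₁0 hσ0
  have hδR₁ : δ ≤ R₁ := div_le_self hR₁0.le hσ1
  set M := (R₂ - R₁) / σ with hMdef
  have hM0 : 0 ≤ M := div_nonneg (by linarith) hσ0.le
  have hMδ : M + δ = R₂ / σ := by rw [hMdef, hδdef, ← add_div]; ring_nf
  have hMle : M ≤ R₂ - R₁ := div_le_self (by linarith) hσ1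
  have hR₂σ : R₂ / σ ≤ R₂ := div_le_self hR₂0.le hσ1
  have hR₂σ0 : 0 < R₂ / σ := div_pos hR₂0 hσ0
  set K₁ : ℤ := ⌈R₂ / R₁⌉ + 1 with hK₁def
  set K₂ : ℤ := ⌈2 * R₂ / δ⌉ + 1 with hK₂def
  have hK₁0 : 0 ≤ K₁ := by
    rw [hK₁def]
    have : (0:ℤ) ≤ ⌈R₂ / R₁⌉ := Int.ceil_nonneg hRR0.le
    linarith
  have hK₂0 : 0 ≤ K₂ := by
    rw [hK₂def]
    have : (0:ℤ) ≤ ⌈2 * R₂ / δ⌉ := Int.ceil_nonneg (by positivity)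
    linarith
  have hK₁le : (K₁ : ℝ) ≤ R₂ / R₁ + 2 := by
    rw [hK₁def]
    have := Int.ceil_lt_add_one (R₂ / R₁)
    push_cast
    linarith
  have hK₂le : (K₂ : ℝ) ≤ 2 * R₂ / δ + 2 := by
    rw [hK₂def]
    have := Int.ceil_lt_add_one (2 * R₂ / δ)
    push_cast
    linarith
  set F₁ : Finset ℝ := ((Finset.Icc (-K₁) K₁).image fun k : ℤ => (k:ℝ) * δ).image
    (fun v => max (-M) (min v M)) with hF₁def
  set F₂ : Finset ℝ := ((Finset.Icc (-K₂) K₂).image fun k : ℤ => (k:ℝ) * δ) ∪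
    {2*R₂ + δ, -(2*R₂ + δ)} with hF₂def
  set Z₁ : Finset (EuclideanSpace ℝ (Fin d)) :=
    (Fintype.piFinset (fun _ : Fin d => F₁)).map (WithLp.equiv 2 (Fin d → ℝ)).symm.toEmbedding with hZ₁def
  set Z₂ : Finset (EuclideanSpace ℝ (Fin d)) :=
    ((Fintype.piFinset (fun _ : Fin d => F₂)).map (WithLp.equiv 2 (Fin d → ℝ)).symm.toEmbedding).filter
      (fun z => ∃ j, 2*R₂ + δ ≤ |z j|) with hZ₂def
  -- properties of the collections
  have P1 : ∀ z ∈ Z₁, ∀ i, |z i| ≤ M := by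
    intro z hz i
    have hzi : z i ∈ F₁ := Fintype.mem_piFinset.mp (Finset.mem_map_equiv.mp hz) i
    rw [hF₁def] at hzi
    obtain ⟨v, -, hv⟩ := Finset.mem_image.mp hzi
    rw [← hv, abs_le]
    constructor
    · exact le_max_left _ _
    · exact max_le (by linarith) (min_le_right _ _)
  have P2 : ∀ p : EuclideanSpace ℝ (Fin d), (∀ i, |p i| ≤ R₂ / σ) →
      ∃ z ∈ Z₁, ∀ i, |p i - z i| ≤ δ := by
    intro p hp
    have hcoord : ∀ i, ∃ w ∈ F₁, |p i - w| ≤ δ := by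
      intro i
      have hbd : (R₂ / σ) / δ + 1/2 ≤ (K₁ : ℝ) := by
        have he : (R₂ / σ) / δ = R₂ / R₁ := by
          rw [hδdef]
          field_simp
        rw [he]
        have := Int.le_ceil (R₂ / R₁)
        rw [hK₁def]
        push_cast
        linarith
      obtain ⟨k, hk, hk2⟩ := grid_lemma δ hδ0 K₁ (p i) (R₂ / σ) (hp i) hbd
      refine ⟨max (-M) (min ((k:ℝ) * δ) M), ?_, ?_⟩
      · rw [hF₁def]
        exact Finset.mem_image.mpr ⟨(k:ℝ) * δ, Finset.mem_image.mpr ⟨k, hk, rfl⟩, rfl⟩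
      · exact clamp_lemma M δ (p i) ((k:ℝ)*δ) hM0 (by rw [hMδ]; exact hp i)
          (by linarith)
    choose w hw1 hw2 using hcoord
    exact ⟨WithLp.toLp 2 w, Finset.mem_map_equiv.mpr (Fintype.mem_piFinset.mpr hw1), hw2⟩
  have P3 : ∀ z ∈ Z₂, ∃ j, 2*R₂ + δ ≤ |z j| := fun z hz => (Finset.mem_filter.mp hz).2
  have P4 : ∀ q : EuclideanSpace ℝ (Fin d), (∀ i, |q i| ≤ 2*R₂) →
      ∀ j, |q j| = 2*R₂ → ∃ z ∈ Z₂, ∀ i, |q i - z i| ≤ δ := by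
    intro q hq j hj
    have hcoord : ∀ i, ∃ w, (w ∈ F₂ ∧ |q i - w| ≤ δ) := by
      intro i
      have hbd : (2*R₂) / δ + 1/2 ≤ (K₂ : ℝ) := by
        have := Int.le_ceil (2 * R₂ / δ)
        rw [hK₂def]
        push_cast
        linarith
      obtain ⟨k, hk, hk2⟩ := grid_lemma δ hδ0 K₂ (q i) (2*R₂) (hq i) hbd
      refine ⟨(k:ℝ) * δ, ?_, by linarith⟩
      rw [hF₂def]
      exact Finset.mem_union_left _ (Finset.mem_image.mpr ⟨k, hk, rfl⟩)
    choose w hw1 hw2 using hcoord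
    set z : EuclideanSpace ℝ (Fin d) :=
      WithLp.toLp 2 (fun i => if i = j then (if 0 ≤ q j then 2*R₂ + δ else -(2*R₂ + δ)) else w i :
        Fin d → ℝ) with hzdef
    have hmem : ∀ i, z i ∈ F₂ := by
      intro i
      by_cases h : i = j
      · simp only [hzdef]
        simp only [h, if_pos]
        rw [hF₂def]
        split_ifs
        · exact Finset.mem_union_right _ (by simp)
        · exact Finset.mem_union_right _ (by simp)
      · simp only [hzdef]
        simp only [h, if_neg, if_false]
        exact hw1 i
    refine ⟨z, Finset.mem_filter.mpr ⟨Finset.mem_map_equiv.mpr (Fintype.mem_piFinset.mpr hmem), ⟨j, ?_⟩⟩, ?_⟩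
    · simp only [hzdef, eq_self_iff_true, if_true]
      by_cases h2 : 0 ≤ q j
      · rw [if_pos h2, abs_of_nonneg (by linarith)]
      · rw [if_neg h2, abs_neg, abs_of_nonneg (by linarith)]
    · intro i
      by_cases h : i = j
      · subst h
        simp only [hzdef, eq_self_iff_true, if_true]
        by_cases h2 : 0 ≤ q i
        · rw [if_pos h2]
          have hqi : q i = 2*R₂ := by rw [abs_of_nonneg h2] at hj; exact hj
          rw [hqi, abs_le]
          constructor <;> linarith
        · rw [if_neg h2]
          have hqi : q i = -(2*R₂) := by
            rw [abs_of_neg (lt_of_not_ge h2)] at hj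
            linarith
          rw [hqi, abs_le]
          constructor <;> linarith
      · simp only [hzdef]
        simp only [h, if_neg, if_false]
        exact hw2 i
  -- cardinality bounds
  have hIccCard : ∀ K : ℤ, 0 ≤ K → ((Finset.Icc (-K) K).card : ℝ) = 2*(K:ℝ) + 1 := by
    intro K hK
    rw [Int.card_Icc]
    have h1 : K + 1 - (-K) = 2*K + 1 := by ring
    rw [h1]
    have h2 : (0:ℤ) ≤ 2*K+1 := by omega
    have h3 : (((2*K+1).toNat : ℕ) : ℝ) = ((((2*K+1).toNat : ℕ) : ℤ) : ℝ) := by push_cast; ring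
    rw [h3, Int.toNat_of_nonneg h2]
    push_cast
    ring
  have hF₁card : (F₁.card : ℝ) ≤ 8*(d:ℝ)*(R₂/R₁) := by
    have h1 : F₁.card ≤ (Finset.Icc (-K₁) K₁).card :=
      le_trans (Finset.card_image_le) (Finset.card_image_le)
    have h2 : ((Finset.Icc (-K₁) K₁).card : ℝ) = 2*(K₁:ℝ)+1 := hIccCard K₁ hK₁0
    have h3 : (F₁.card : ℝ) ≤ 2*(K₁:ℝ)+1 := by
      rw [← h2]; exact_mod_cast h1
    nlinarith
  have hF₂card : (F₂.card : ℝ) ≤ 8*(d:ℝ)*(R₂/R₁) := by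
    have h1 : F₂.card ≤ (Finset.Icc (-K₂) K₂).card + 2 := by
      calc F₂.card ≤ ((Finset.Icc (-K₂) K₂).image fun k : ℤ => (k:ℝ) * δ).card
            + ({2*R₂ + δ, -(2*R₂ + δ)} : Finset ℝ).card := Finset.card_union_le _ _
        _ ≤ (Finset.Icc (-K₂) K₂).card + 2 := by
            have := Finset.card_image_le (s := Finset.Icc (-K₂) K₂)
              (f := fun k : ℤ => (k:ℝ) * δ)
            have h2 : ({2*R₂ + δ, -(2*R₂ + δ)} : Finset ℝ).card ≤ 2 :=
              Finset.card_insert_le _ _ |>.trans (by simp)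
            omega
    have h2 : ((Finset.Icc (-K₂) K₂).card : ℝ) = 2*(K₂:ℝ)+1 := hIccCard K₂ hK₂0
    have h3 : (F₂.card : ℝ) ≤ 2*(K₂:ℝ)+3 := by
      have h5 : (F₂.card : ℝ) ≤ ((Finset.Icc (-K₂) K₂).card : ℝ) + 2 := by exact_mod_cast h1
      rw [h2] at h5
      linarith
    have h4 : 2 * R₂ / δ = 2 * σ * (R₂ / R₁) := by
      rw [hδdef]
      field_simp
    rw [h4] at hK₂le
    nlinarith
  have hcast : ∀ (F : Finset ℝ), (((Fintype.piFinset fun _ : Fin d => F).card : ℕ) : ℝ)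
      = ((F.card : ℝ)) ^ d := by
    intro F
    rw [Fintype.card_piFinset]
    push_cast
    simp
  have hZ₁card : ((Z₁.card : ℕ) : ℝ) ≤ (8*(d:ℝ))^d * (R₂/R₁)^d := by
    rw [hZ₁def, Finset.card_map, hcast F₁, ← mul_pow]
    exact pow_le_pow_left₀ (Nat.cast_nonneg _) hF₁card d
  have hZ₂card : ((Z₂.card : ℕ) : ℝ) ≤ (8*(d:ℝ))^d * (R₂/R₁)^d := by
    have h1 : Z₂.card ≤ (Fintype.piFinset fun _ : Fin d => F₂).card := by
      rw [hZ₂def]; exact (Finset.card_filter_le _ _).trans (Finset.card_map _).le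
    have h2 : (((Fintype.piFinset fun _ : Fin d => F₂).card : ℕ) : ℝ)
        ≤ (8*(d:ℝ))^d * (R₂/R₁)^d := by
      rw [hcast F₂, ← mul_pow]
      exact pow_le_pow_left₀ (Nat.cast_nonneg _) hF₂card d
    exact le_trans (by exact_mod_cast h1) h2
  -- nonemptiness
  have hZ₁ne : Z₁.Nonempty := by
    refine ⟨WithLp.toLp 2 (fun _ => 0 : Fin d → ℝ), Finset.mem_map_equiv.mpr (Fintype.mem_piFinset.mpr fun i => show (fun _ => 0 : Fin d → ℝ) i ∈ F₁ from ?_)⟩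
    rw [hF₁def]
    refine Finset.mem_image.mpr ⟨0, Finset.mem_image.mpr ⟨0, ?_, by simp⟩, ?_⟩
    · rw [Finset.mem_Icc]; omega
    · rw [min_eq_left hM0, max_eq_right (neg_nonpos.mpr hM0)]
  have hZ₂ne : Z₂.Nonempty := by
    refine ⟨WithLp.toLp 2 (fun i => if i = (⟨0, hd⟩ : Fin d) then 2*R₂ + δ else 0 : Fin d → ℝ),
      Finset.mem_filter.mpr ⟨Finset.mem_map_equiv.mpr (Fintype.mem_piFinset.mpr fun i => show (fun i => if i = (⟨0, hd⟩ : Fin d) then 2*R₂ + δ else 0 : Fin d → ℝ) i ∈ F₂ from ?_), ⟨⟨0, hd⟩, ?_⟩⟩⟩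
    · by_cases h : i = (⟨0, hd⟩ : Fin d)
      · simp only [h, if_pos]
        rw [hF₂def]
        exact Finset.mem_union_right _ (by simp)
      · simp only [h, if_neg, if_false]
        rw [hF₂def]
        refine Finset.mem_union_left _ (Finset.mem_image.mpr ⟨0, ?_, by simp⟩)
        rw [Finset.mem_Icc]; omega
    · show 2*R₂ + δ ≤ |if (⟨0, hd⟩ : Fin d) = (⟨0, hd⟩ : Fin d) then 2*R₂ + δ else 0|
      rw [if_pos rfl, abs_of_nonneg (by linarith)]
  -- assemble
  set n : ℕ := max Z₁.card Z₂.card with hndef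
  obtain ⟨z₁, hz₁mem, hz₁surj⟩ := surj_lemma Z₁ hZ₁ne n (le_max_left _ _)
  obtain ⟨z₂, hz₂mem, hz₂surj⟩ := surj_lemma Z₂ hZ₂ne n (le_max_right _ _)
  refine ⟨n, z₁, z₂, ?_, ?_, ?_⟩
  · rw [hndef]
    rw [Nat.cast_max]
    exact max_le hZ₁card hZ₂card
  · -- separation
    rintro i j p hp q hq
    obtain ⟨wp, hwp, rfl⟩ := hp
    obtain ⟨wq, hwq, rfl⟩ := hq
    obtain ⟨j₀, hj₀⟩ := P3 (z₂ j) (hz₂mem j)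
    have hwpb : |wp j₀| ≤ 2*R₁ := hwp.1 j₀
    have hwqb : |wq j₀| ≤ 2*R₁ := hwq.1 j₀
    have hz₁b : |z₁ i j₀| ≤ M := P1 (z₁ i) (hz₁mem i) j₀
    have hkey : (2*R₂ + δ) - M - 4*R₁ ≤ ‖(z₁ i + wp) - (z₂ j + wq)‖ := by
      have hc := coord_le_eucl_norm d ((z₁ i + wp) - (z₂ j + wq)) j₀
      have happ : ((z₁ i + wp) - (z₂ j + wq)) j₀ = (z₁ i j₀ + wp j₀) - (z₂ j j₀ + wq j₀) :=
        rfl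
      rw [happ] at hc
      set a := z₁ i j₀
      set w := wp j₀
      set b := z₂ j j₀
      set u := wq j₀
      have e1 : |b| ≤ |b + u| + |u| := by simpa using abs_add_le (b + u) (-u)
      have e2 : |a + w| ≤ |a| + |w| := abs_add_le a w
      have e3 : |b + u| - |a + w| ≤ |(a + w) - (b + u)| := by
        rw [abs_sub_comm]
        exact abs_sub_abs_le_abs_sub _ _
      linarith
    have heq : (2 - 1/σ) * (R₂ - 2*R₁) = (2*R₂ + δ) - M - 4*R₁ := by
      rw [hδdef, hMdef]
      field_simp
      ring
    rw [heq]
    exact hkey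
  · -- crossing
    intro γ hγ hcr
    obtain ⟨⟨x, hxΓ, hxF⟩, ⟨y, hyΓ, hyF⟩⟩ := hcr
    obtain ⟨wx, hwx, hxw⟩ := hxF
    obtain ⟨wy, hwy, hyw⟩ := hyF
    simp only [zero_add] at hxw hyw
    subst hxw
    subst hyw
    obtain ⟨t₀, ht₀, hγt₀⟩ := hxΓ
    obtain ⟨t₁, ht₁, hγt₁⟩ := hyΓ
    have hsnx : supNorm d (γ t₀) = R₂ / σ := by
      rw [hγt₀]
      exact frontier_cube_supNorm d (R₂ / σ) hR₂σ0.le wx hwx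
    have hsny : supNorm d (γ t₁) = 2 * R₂ := by
      rw [hγt₁]
      exact frontier_cube_supNorm d (2*R₂) (by linarith) wy hwy
    constructor
    · -- inner collection
      have hp : ∀ i, |γ t₀ i| ≤ R₂ / σ := fun i => hsnx ▸ coord_le_supNorm d (γ t₀) i
      obtain ⟨z, hzZ, hzcov⟩ := P2 (γ t₀) hp
      obtain ⟨i, hi⟩ := hz₁surj z hzZ
      refine ⟨i, crosses_of d hd γ hγ t₀ t₁ ht₀ ht₁ (z₁ i) R₁ hR₁0 ?_ ?_⟩
      · rw [supNorm_le_iff d _ _ (div_nonneg hR₁0.le hσ0.le)]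
        intro k
        rw [hi]
        exact hzcov k
      · obtain ⟨j', hj'⟩ := supNorm_exists d hd (γ t₁)
        rw [hsny] at hj'
        have h1 : |γ t₁ j' - z₁ i j'| ≤ supNorm d (γ t₁ - z₁ i) :=
          coord_le_supNorm d (γ t₁ - z₁ i) j'
        have h2 : |z₁ i j'| ≤ M := P1 (z₁ i) (hz₁mem i) j'
        have h3 : |γ t₁ j'| - |z₁ i j'| ≤ |γ t₁ j' - z₁ i j'| := abs_sub_abs_le_abs_sub _ _
        linarith
    · -- outer collection
      obtain ⟨j', hj'⟩ := supNorm_exists d hd (γ t₁)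
      rw [hsny] at hj'
      have hq : ∀ i, |γ t₁ i| ≤ 2*R₂ := fun i => hsny ▸ coord_le_supNorm d (γ t₁) i
      obtain ⟨z, hzZ, hzcov⟩ := P4 (γ t₁) hq j' hj'
      obtain ⟨j, hj⟩ := hz₂surj z hzZ
      refine ⟨j, crosses_of d hd γ hγ t₁ t₀ ht₁ ht₀ (z₂ j) R₁ hR₁0 ?_ ?_⟩
      · rw [supNorm_le_iff d _ _ (div_nonneg hR₁0.le hσ0.le)]
        intro k
        rw [hj]
        exact hzcov k
      · obtain ⟨j₀, hj₀⟩ := P3 (z₂ j) (hz₂mem j)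
        have h1 : |γ t₀ j₀ - z₂ j j₀| ≤ supNorm d (γ t₀ - z₂ j) :=
          coord_le_supNorm d (γ t₀ - z₂ j) j₀
        have h2 : |γ t₀ j₀| ≤ R₂ / σ := hsnx ▸ coord_le_supNorm d (γ t₀) j₀
        have h3 : |z₂ j j₀| - |γ t₀ j₀| ≤ |z₂ j j₀ - γ t₀ j₀| := abs_sub_abs_le_abs_sub _ _
        rw [abs_sub_comm] at h3
        linarith
end

section
/- For every dimension d ≥ 1 there exists a constant c ≥ 1, depending only on d, such that for every R, M, L ≥ 6√d the following holds: setting n = ⌊R/(6ML)⌋, for each k = 1,…,n there exist points z^k_1, …, z^k_{m_k} in ℝ^d with m_k ≤ c (R/L)^{d−1} such that: (1) for all k₁ ≠ k₂ and all i, j, the Euclidean distance between z^{k₁}_i + A^∞(L) and z^{k₂}_j + A^∞(L) is at least (M − 4√d) L |k₁ − k₂|; (2) every continuous path γ : [0,1] → ℝ^d whose image intersects both the sphere ∂B(1) and the sphere ∂B(R) crosses, for each k = 1,…,n, at least one of the annuli z^k_i + A^∞(L). -/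
open Filter

noncomputable def gnorm (d : ℕ) (x : EuclideanSpace ℝ (Fin d)) : ℝ :=
  ‖(EuclideanSpace.equiv (Fin d) ℝ) x‖

lemma gnorm_le_iff {d : ℕ} {x : EuclideanSpace ℝ (Fin d)} {a : ℝ} (ha : 0 ≤ a) :
    gnorm d x ≤ a ↔ ∀ i, |x i| ≤ a := by
  simpa [gnorm, Real.norm_eq_abs] using
    pi_norm_le_iff_of_nonneg (x := (EuclideanSpace.equiv (Fin d) ℝ) x) ha

lemma abs_le_gnorm {d : ℕ} (x : EuclideanSpace ℝ (Fin d)) (i : Fin d) : |x i| ≤ gnorm d x := by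
  simpa [gnorm, Real.norm_eq_abs] using norm_le_pi_norm ((EuclideanSpace.equiv (Fin d) ℝ) x) i

lemma gnorm_nonneg {d : ℕ} (x : EuclideanSpace ℝ (Fin d)) : 0 ≤ gnorm d x :=
  norm_nonneg _

lemma continuous_gnorm (d : ℕ) : Continuous (gnorm d) :=
  continuous_norm.comp (EuclideanSpace.equiv (Fin d) ℝ).continuous

lemma gnorm_smul {d : ℕ} (c : ℝ) (x : EuclideanSpace ℝ (Fin d)) :
    gnorm d (c • x) = |c| * gnorm d x := by
  simp [gnorm, map_smul, norm_smul]

lemma norm_le_sqrt_mul_gnorm {d : ℕ} (x : EuclideanSpace ℝ (Fin d)) :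
    ‖x‖ ≤ Real.sqrt d * gnorm d x := by
  rw [EuclideanSpace.norm_eq]
  have h1 : ∑ i : Fin d, ‖x i‖ ^ 2 ≤ (d : ℝ) * (gnorm d x) ^ 2 := by
    calc ∑ i : Fin d, ‖x i‖ ^ 2 ≤ ∑ _i : Fin d, (gnorm d x) ^ 2 := by
          apply Finset.sum_le_sum
          intro i _
          have := abs_le_gnorm x i
          have h0 : (0:ℝ) ≤ |x i| := abs_nonneg _
          rw [Real.norm_eq_abs]
          nlinarith
      _ = (d : ℝ) * (gnorm d x) ^ 2 := by simp [mul_comm]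
  calc Real.sqrt (∑ i : Fin d, ‖x i‖ ^ 2) ≤ Real.sqrt ((d : ℝ) * (gnorm d x) ^ 2) :=
        Real.sqrt_le_sqrt h1
    _ = Real.sqrt d * gnorm d x := by
        rw [Real.sqrt_mul (Nat.cast_nonneg d), Real.sqrt_sq (gnorm_nonneg x)]

lemma mem_cubeSet_iff {d : ℕ} {x : EuclideanSpace ℝ (Fin d)} {a : ℝ} (ha : 0 ≤ a) :
    x ∈ cubeSet d a ↔ gnorm d x ≤ a := by
  rw [gnorm_le_iff ha]; rfl

lemma mem_frontier_cubeSet {d : ℕ} {x : EuclideanSpace ℝ (Fin d)} {a : ℝ} (ha : 0 < a)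
    (hx : gnorm d x = a) : x ∈ frontier (cubeSet d a) := by
  rw [frontier]
  constructor
  · exact subset_closure ((mem_cubeSet_iff ha.le).2 hx.le)
  · intro hint
    have hnhds : cubeSet d a ∈ nhds x := mem_interior_iff_mem_nhds.mp hint
    have htend : Tendsto (fun n : ℕ => (1 + 1/((n:ℝ)+1)) • x) atTop (nhds x) := by
      have h1 : Tendsto (fun n : ℕ => (1 + 1/((n:ℝ)+1))) atTop (nhds 1) := by
        simpa using (tendsto_const_nhds (x := (1:ℝ))).add (tendsto_one_div_add_atTop_nhds_zero_nat : Tendsto (fun n : ℕ => 1 / ((n : ℝ) + 1)) atTop (nhds 0))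
      simpa using h1.smul_const x
    obtain ⟨n, hn⟩ := (htend.eventually_mem hnhds).exists
    have hle := (mem_cubeSet_iff ha.le).1 hn
    rw [gnorm_smul, hx] at hle
    have hpos : (0:ℝ) < 1/((n:ℝ)+1) := by positivity
    have habs : |1 + 1/((n:ℝ)+1)| = 1 + 1/((n:ℝ)+1) := abs_of_pos (by linarith)
    rw [habs] at hle
    nlinarith

lemma crosses_of_gnorm {d : ℕ} (hd : 1 ≤ d) {γ : ℝ → EuclideanSpace ℝ (Fin d)}
    (hγ : ContinuousOn γ (Set.Icc 0 1)) {z : EuclideanSpace ℝ (Fin d)} {L : ℝ} (hL : 0 < L)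
    {t₀ t₁ : ℝ} (h₀ : t₀ ∈ Set.Icc (0:ℝ) 1) (h₁ : t₁ ∈ Set.Icc (0:ℝ) 1)
    (ha : gnorm d (γ t₀ - z) ≤ L / Real.sqrt d) (hb : 2 * L ≤ gnorm d (γ t₁ - z)) :
    Crosses d (γ '' Set.Icc 0 1) z L := by
  have hsd : (1:ℝ) ≤ Real.sqrt d := Real.one_le_sqrt.2 (by exact_mod_cast hd)
  have hsub : Set.uIcc t₀ t₁ ⊆ Set.Icc (0:ℝ) 1 := by
    rw [show Set.Icc (0:ℝ) 1 = Set.uIcc 0 1 from (Set.uIcc_of_le zero_le_one).symm]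
    exact Set.uIcc_subset_uIcc (by rw [Set.uIcc_of_le zero_le_one]; exact h₀)
      (by rw [Set.uIcc_of_le zero_le_one]; exact h₁)
  set f : ℝ → ℝ := fun t => gnorm d (γ t - z) with hf
  have hcont : ContinuousOn f (Set.uIcc t₀ t₁) :=
    (continuous_gnorm d).comp_continuousOn ((hγ.mono hsub).sub continuousOn_const)
  have hivt := intermediate_value_uIcc hcont
  have hdiv : L / Real.sqrt d ≤ 2 * L := by
    have h1 : L / Real.sqrt d ≤ L := by
      apply div_le_self hL.le hsd
    linarith
  have key : ∀ a : ℝ, 0 < a → f t₀ ≤ a → a ≤ f t₁ →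
      (γ '' Set.Icc 0 1 ∩ ((fun w => z + w) '' frontier (cubeSet d a))).Nonempty := by
    intro a hapos haf haf'
    have hmem : a ∈ Set.uIcc (f t₀) (f t₁) := Set.mem_uIcc.2 (Or.inl ⟨haf, haf'⟩)
    obtain ⟨t, ht, hft⟩ := hivt hmem
    refine ⟨γ t, ⟨t, hsub ht, rfl⟩, ⟨γ t - z, mem_frontier_cubeSet hapos hft, ?_⟩⟩
    show z + (γ t - z) = γ t
    abel
  constructor
  · exact key _ (by positivity) ha (le_trans hdiv hb)
  · exact key _ (by positivity) (le_trans ha hdiv) hb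

noncomputable def toPt (d : ℕ) (L : ℝ) (v : Fin d → ℤ) : EuclideanSpace ℝ (Fin d) :=
  (EuclideanSpace.equiv (Fin d) ℝ).symm (fun i => (2*L/Real.sqrt d) * (v i))

lemma toPt_apply (d : ℕ) (L : ℝ) (v : Fin d → ℤ) (i : Fin d) :
    toPt d L v i = (2*L/Real.sqrt d) * (v i) := rfl

lemma norm_toPt_sq (d : ℕ) (L : ℝ) (v : Fin d → ℤ) :
    ‖toPt d L v‖^2 = (2*L/Real.sqrt d)^2 * ∑ i, ((v i : ℝ))^2 := by
  rw [EuclideanSpace.norm_eq, Real.sq_sqrt (by positivity)]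
  simp only [toPt_apply, Real.norm_eq_abs, abs_mul, mul_pow, sq_abs, ← Finset.mul_sum]

open Classical in
noncomputable def shellSet (d : ℕ) (L r : ℝ) (B : ℤ) : Finset (Fin d → ℤ) :=
  (Finset.Icc (fun _ => -B) (fun _ => B)).filter
    (fun v => r - L ≤ ‖toPt d L v‖ ∧ ‖toPt d L v‖ ≤ r + L)

set_option maxHeartbeats 1000000 in
lemma shellSet_card {d : ℕ} (hd : 1 ≤ d) {L r : ℝ} (hL : 0 < L) (hr : 2*L ≤ r) (B : ℤ) :
    (shellSet d L r B).card ≤ d * ((8*d+2) * ((2*B+1).toNat)^(d-1)) := by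
  classical
  have hd0 : (0:ℝ) < d := by exact_mod_cast hd
  have hsd1 : 1 ≤ Real.sqrt d := Real.one_le_sqrt.2 (by exact_mod_cast hd)
  have hsd0 : (0:ℝ) < Real.sqrt d := lt_of_lt_of_le one_pos hsd1
  have hsdsq : (Real.sqrt d)^2 = d := Real.sq_sqrt hd0.le
  set s : ℝ := 2*L/Real.sqrt d with hs_def
  have hs0 : 0 < s := by positivity
  have hs2 : s^2 = 4*L^2/d := by
    rw [hs_def, div_pow, hsdsq]; ring
  set Nb := (2*B+1).toNat with hNb
  set S := shellSet d L r B with hS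
  set P : Fin d → (Fin d → ℤ) → Prop := fun j v => ∀ i, |v i| ≤ |v j| with hP
  have hcover : S ⊆ Finset.univ.biUnion (fun j => S.filter (P j)) := by
    intro v hv
    obtain ⟨j, _, hj⟩ := Finset.exists_max_image Finset.univ (fun i => |v i|)
      ⟨⟨0, hd⟩, Finset.mem_univ _⟩
    exact Finset.mem_biUnion.2 ⟨j, Finset.mem_univ j,
      Finset.mem_filter.2 ⟨hv, fun i => hj i (Finset.mem_univ i)⟩⟩
  have hstep : ∀ j : Fin d, (S.filter (P j)).card ≤ (8*d+2) * Nb^(d-1) := by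
    intro j
    set T := S.filter (P j) with hT
    -- image bound
    have himg : (T.image (fun v => Function.update v j 0)).card ≤ Nb^(d-1) := by
      have hsub : T.image (fun v => Function.update v j 0) ⊆
          Finset.Icc (fun i => if i = j then 0 else -B) (fun i => if i = j then 0 else B) := by
        intro w hw
        obtain ⟨v, hvT, rfl⟩ := Finset.mem_image.1 hw
        have hvIcc : v ∈ Finset.Icc (fun _ : Fin d => -B) (fun _ => B) :=
          (Finset.mem_filter.1 ((Finset.mem_filter.1 hvT).1)).1
        rw [Finset.mem_Icc] at hvIcc ⊢
        obtain ⟨hlo, hhi⟩ := hvIcc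
        constructor <;> intro i <;> by_cases hij : i = j <;>
          simp [Function.update_apply, hij, hlo i, hhi i]
      calc (T.image (fun v => Function.update v j 0)).card
          ≤ (Finset.Icc (fun i => if i = j then 0 else -B)
              (fun i => if i = j then 0 else B)).card := Finset.card_le_card hsub
        _ = ∏ i, (Finset.Icc (if i = j then 0 else -B) (if i = j then 0 else B)).card :=
            Pi.card_Icc _ _
        _ = Nb^(d-1) := by
            rw [← Finset.mul_prod_erase Finset.univ _ (Finset.mem_univ j)]
            rw [show (if j = j then (0:ℤ) else -B) = 0 from if_pos rfl,
              show (if j = j then (0:ℤ) else B) = 0 from if_pos rfl]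
            have h1 : (Finset.Icc (0:ℤ) 0).card = 1 := by simp
            rw [h1, one_mul]
            have h2 : ∀ i ∈ Finset.univ.erase j,
                (Finset.Icc (if i = j then 0 else -B) (if i = j then 0 else B)).card = Nb := by
              intro i hi
              have hij : i ≠ j := (Finset.mem_erase.1 hi).1
              rw [if_neg hij, if_neg hij, Int.card_Icc]
              congr 1; ring
            rw [Finset.prod_congr rfl h2, Finset.prod_const,
              Finset.card_erase_of_mem (Finset.mem_univ j), Finset.card_univ, Fintype.card_fin]
    -- fiber bound
    have hfib : ∀ w ∈ T.image (fun v => Function.update v j 0),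
        (T.filter (fun v => Function.update v j 0 = w)).card ≤ 8*d+2 := by
      intro w _
      set c' : ℝ := ∑ i, ((w i : ℝ))^2 with hc'
      have hub : (0:ℝ) ≤ (r+L)^2/s^2 - c' ∨ True := Or.inr trivial
      set β : ℝ := Real.sqrt ((r+L)^2/s^2 - c') with hβ
      have hβ0 : 0 ≤ β := Real.sqrt_nonneg _
      set U : Finset ℤ := Finset.Icc ⌈β - 4*(d:ℝ)⌉ ⌊β⌋ ∪ Finset.Icc (-⌊β⌋) (-⌈β - 4*(d:ℝ)⌉)
        with hU
      have hmemU : ∀ v ∈ T.filter (fun v => Function.update v j 0 = w), v j ∈ U := by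
        intro v hv
        obtain ⟨hvT, hvw⟩ := Finset.mem_filter.1 hv
        obtain ⟨hvS, hmax⟩ := Finset.mem_filter.1 hvT
        obtain ⟨hlow, hhigh⟩ := (Finset.mem_filter.1 hvS).2
        set m : ℝ := ((v j : ℤ) : ℝ) with hm
        set Q : ℝ := ∑ i, ((v i : ℝ))^2 with hQdef
        have hn2 := norm_toPt_sq d L v
        rw [← hs_def] at hn2
        have h1 : (r-L)^2 ≤ s^2 * Q := by
          have := pow_le_pow_left₀ (by linarith : (0:ℝ) ≤ r - L) hlow 2
          rw [hn2] at this; exact this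
        have h2 : s^2 * Q ≤ (r+L)^2 := by
          have := pow_le_pow_left₀ (norm_nonneg _) hhigh 2
          rw [hn2] at this; exact this
        -- Q = m^2 + c'
        have hQ : Q = m^2 + c' := by
          rw [hQdef, hc', ← Finset.add_sum_erase Finset.univ _ (Finset.mem_univ j),
            ← Finset.add_sum_erase Finset.univ (fun i => ((w i:ℝ))^2) (Finset.mem_univ j)]
          have hwj : w j = 0 := by rw [← hvw]; simp [Function.update_apply]
          have : ∀ i ∈ Finset.univ.erase j, ((w i : ℝ))^2 = ((v i : ℝ))^2 := by
            intro i hi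
            have hij : i ≠ j := (Finset.mem_erase.1 hi).1
            rw [← hvw]; simp [Function.update_apply, hij]
          rw [Finset.sum_congr rfl this, hwj]
          push_cast
          ring
        -- Q ≤ d * m^2
        have hQd : Q ≤ d * m^2 := by
          rw [hQdef]
          calc ∑ i, ((v i : ℝ))^2 ≤ ∑ _i : Fin d, m^2 := by
                apply Finset.sum_le_sum
                intro i _
                have := hmax i
                have habs : |((v i : ℤ) : ℝ)| ≤ |m| := by rw [hm]; exact_mod_cast this
                calc ((v i : ℝ))^2 = |((v i : ℤ) : ℝ)|^2 := (sq_abs _).symm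
                  _ ≤ |m|^2 := pow_le_pow_left₀ (abs_nonneg _) habs 2
                  _ = m^2 := sq_abs _
            _ = d * m^2 := by simp [mul_comm]
        have hc'0 : 0 ≤ c' := Finset.sum_nonneg fun i _ => sq_nonneg _
        -- |m| ≤ β
        have hβsq : β^2 = (r+L)^2/s^2 - c' := by
          rw [hβ]
          apply Real.sq_sqrt
          have : m^2 + c' ≤ (r+L)^2/s^2 := by
            rw [← hQ]; rw [le_div_iff₀ (by positivity)]; linarith [h2]
          nlinarith [sq_nonneg m]
        have hmβ : |m| ≤ β := by
          have hm2 : m^2 ≤ β^2 := by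
            rw [hβsq]
            have : m^2 + c' ≤ (r+L)^2/s^2 := by
              rw [← hQ]; rw [le_div_iff₀ (by positivity)]; linarith [h2]
            linarith
          nlinarith [abs_nonneg m, hβ0, sq_abs m]
        -- lower bound on |m|
        have hmlow : (r-L)/(2*L) ≤ |m| := by
          have hq1 : (r-L)^2/s^2 ≤ Q := by rw [div_le_iff₀ (by positivity)]; linarith [h1]
          have hfrac : (r-L)^2/s^2 = d * ((r-L)/(2*L))^2 := by
            rw [hs2]; field_simp; ring
          have hm2 : ((r-L)/(2*L))^2 ≤ m^2 := by nlinarith [hQd, hq1]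
          have h0 : (0:ℝ) ≤ (r-L)/(2*L) := div_nonneg (by linarith) (by linarith)
          nlinarith [abs_nonneg m, sq_abs m, sq_nonneg ((r-L)/(2*L) + |m|)]
        -- gap bound
        have hgap : β ≤ |m| + 4*d := by
          by_cases hcase : β ≤ |m|
          · linarith [hd0]
          · push_neg at hcase
            have hprod : (β - |m|) * (β + |m|) ≤ (d:ℝ)*r/L := by
              have hexp : β^2 - m^2 ≤ (d:ℝ)*r/L := by
                have hq1 : (r-L)^2/s^2 ≤ Q := by rw [div_le_iff₀ (by positivity)]; linarith [h1]
                have hdiff : (r+L)^2/s^2 - (r-L)^2/s^2 = (d:ℝ)*r/L := by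
                  rw [hs2]; field_simp; ring
                have h3 : (r-L)^2/s^2 ≤ c' + m^2 := by rw [hQ] at hq1; linarith
                rw [hβsq]
                linarith [hdiff]
              calc (β - |m|) * (β + |m|) = β^2 - |m|^2 := by ring
                _ = β^2 - m^2 := by rw [sq_abs]
                _ ≤ (d:ℝ)*r/L := hexp
            have hsum : r/(4*L) ≤ β + |m| := by
              have : (r-L)/(2*L) ≥ r/(4*L) := by
                rw [ge_iff_le, div_le_div_iff₀ (by positivity) (by positivity)]
                nlinarith
              linarith [hmlow, hβ0]
            have hrL : (0:ℝ) < r/(4*L) := div_pos (by linarith) (by linarith)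
            have hx : (0:ℝ) < β - |m| := by linarith
            have h5 : (β - |m|) * (r/(4*L)) ≤ (d:ℝ)*r/L :=
              le_trans (mul_le_mul_of_nonneg_left hsum hx.le) hprod
            have heq : (d:ℝ)*r/L = 4*d*(r/(4*L)) := by field_simp
            nlinarith [h5, hrL, heq, mul_pos hrL hx]
        -- conclude membership
        rw [hU, Finset.mem_union]
        rcases le_or_gt 0 (v j) with hvj | hvj
        · left
          rw [Finset.mem_Icc]
          have habs : |m| = m := abs_of_nonneg (by rw [hm]; exact_mod_cast hvj)
          constructor
          · apply Int.ceil_le.2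
            have h6 : β - 4*(d:ℝ) ≤ m := by linarith [hgap]
            rw [hm] at h6
            exact_mod_cast h6
          · apply Int.le_floor.2
            have h6 : m ≤ β := by linarith [hmβ]
            rw [hm] at h6
            exact_mod_cast h6
        · right
          rw [Finset.mem_Icc]
          have habs : |m| = -m := abs_of_neg (by rw [hm]; exact_mod_cast hvj)
          constructor
          · rw [neg_le]
            apply Int.le_floor.2
            have h6 : -m ≤ β := by linarith [hmβ]
            rw [hm] at h6
            push_cast
            linarith [h6]
          · rw [le_neg]
            apply Int.ceil_le.2
            have h6 : β - 4*(d:ℝ) ≤ -m := by linarith [hgap]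
            rw [hm] at h6
            push_cast
            linarith [h6]
      have hinj : Set.InjOn (fun v : Fin d → ℤ => v j)
          ((T.filter (fun v => Function.update v j 0 = w) : Finset (Fin d → ℤ)) :
            Set (Fin d → ℤ)) := by
        intro v₁ h₁ v₂ h₂ hvj
        have hw₁ : Function.update v₁ j 0 = w := (Finset.mem_filter.1 (Finset.mem_coe.1 h₁)).2
        have hw₂ : Function.update v₂ j 0 = w := (Finset.mem_filter.1 (Finset.mem_coe.1 h₂)).2
        funext i
        by_cases hij : i = j
        · subst hij; exact hvj
        · have := congrFun (hw₁.trans hw₂.symm) i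
          simpa [Function.update_apply, hij] using this
      have hcardU : U.card ≤ 8*d+2 := by
        have hbound : ∀ (x y : ℤ), ((x:ℝ) ≤ β + 1 - (β - 4*d)) → True := fun _ _ _ => trivial
        have h1 : (Finset.Icc ⌈β - 4*(d:ℝ)⌉ ⌊β⌋).card ≤ 4*d+1 := by
          rw [Int.card_Icc]
          rw [Int.toNat_le]
          have : ((⌊β⌋ + 1 - ⌈β - 4*(d:ℝ)⌉ : ℤ) : ℝ) ≤ ((4*d+1 : ℕ) : ℝ) := by
            push_cast
            linarith [Int.floor_le β, Int.le_ceil (β - 4*(d:ℝ))]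
          exact_mod_cast this
        have h2 : (Finset.Icc (-⌊β⌋) (-⌈β - 4*(d:ℝ)⌉)).card ≤ 4*d+1 := by
          rw [Int.card_Icc]
          rw [Int.toNat_le]
          have : ((-⌈β - 4*(d:ℝ)⌉ + 1 - (-⌊β⌋) : ℤ) : ℝ) ≤ ((4*d+1 : ℕ) : ℝ) := by
            push_cast
            linarith [Int.floor_le β, Int.le_ceil (β - 4*(d:ℝ))]
          exact_mod_cast this
        calc U.card ≤ (Finset.Icc ⌈β - 4*(d:ℝ)⌉ ⌊β⌋).card
              + (Finset.Icc (-⌊β⌋) (-⌈β - 4*(d:ℝ)⌉)).card := Finset.card_union_le _ _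
          _ ≤ (4*d+1) + (4*d+1) := Nat.add_le_add h1 h2
          _ = 8*d+2 := by ring
      calc (T.filter (fun v => Function.update v j 0 = w)).card ≤ U.card :=
            Finset.card_le_card_of_injOn _ hmemU hinj
        _ ≤ 8*d+2 := hcardU
    calc T.card ≤ (8*d+2) * (T.image (fun v => Function.update v j 0)).card :=
          Finset.card_le_mul_card_image T (8*d+2) hfib
      _ ≤ (8*d+2) * Nb^(d-1) := Nat.mul_le_mul_left _ himg
  calc S.card ≤ (Finset.univ.biUnion (fun j => S.filter (P j))).card :=
        Finset.card_le_card hcover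
    _ ≤ ∑ j : Fin d, (S.filter (P j)).card := Finset.card_biUnion_le
    _ ≤ ∑ _j : Fin d, (8*d+2) * Nb^(d-1) := Finset.sum_le_sum (fun j _ => hstep j)
    _ = d * ((8*d+2) * Nb^(d-1)) := by simp [mul_comm]


lemma abs_coord_le_norm {d : ℕ} (x : EuclideanSpace ℝ (Fin d)) (i : Fin d) : |x i| ≤ ‖x‖ := by
  rw [EuclideanSpace.norm_eq, ← Real.sqrt_sq_eq_abs]
  apply Real.sqrt_le_sqrt
  have : (x i)^2 = ‖x i‖^2 := by rw [Real.norm_eq_abs, sq_abs]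
  rw [this]
  exact Finset.single_le_sum (fun j _ => sq_nonneg (‖x j‖)) (Finset.mem_univ i)

lemma mem_shellSet {d : ℕ} {L r : ℝ} {B : ℤ} {v : Fin d → ℤ} :
    v ∈ shellSet d L r B ↔
      v ∈ Finset.Icc (fun _ => -B) (fun _ => B) ∧
        (r - L ≤ ‖toPt d L v‖ ∧ ‖toPt d L v‖ ≤ r + L) := by
  unfold shellSet
  exact Finset.mem_filter

set_option maxHeartbeats 1600000 in
/-- there is a dimensional constant `c ≥ 1` such that for all
`R, M, L ≥ 6√d`, setting `n = ⌊R/(6ML)⌋`, there are `n` collections of at most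
`c (R/L)^{d-1}` translated copies of `A^∞(L)`, the `k₁`-th and `k₂`-th collections being
`(M - 4√d) L |k₁ - k₂|`-separated, such that every continuous path touching both `∂B(1)`
and `∂B(R)` crosses at least one annulus in each collection. -/
theorem statement15 (d : ℕ) (hd : 1 ≤ d) :
    ∃ c : ℝ, 1 ≤ c ∧ ∀ R M L : ℝ,
      6 * Real.sqrt d ≤ R → 6 * Real.sqrt d ≤ M → 6 * Real.sqrt d ≤ L →
      ∃ (m : Fin (Nat.floor (R / (6 * M * L))) → ℕ)
        (z : ∀ k, Fin (m k) → EuclideanSpace ℝ (Fin d)),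
        (∀ k, (m k : ℝ) ≤ c * (R / L) ^ (d - 1)) ∧
        (∀ k₁ k₂, k₁ ≠ k₂ → ∀ (i : Fin (m k₁)) (j : Fin (m k₂)),
          ∀ p ∈ (fun w => z k₁ i + w) '' annulusSet d L,
          ∀ q ∈ (fun w => z k₂ j + w) '' annulusSet d L,
            (M - 4 * Real.sqrt d) * L * |((k₁ : ℕ) : ℝ) - ((k₂ : ℕ) : ℝ)| ≤ ‖p - q‖) ∧
        (∀ γ : ℝ → EuclideanSpace ℝ (Fin d), ContinuousOn γ (Set.Icc 0 1) →
          (γ '' Set.Icc 0 1 ∩ Metric.sphere 0 1).Nonempty →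
          (γ '' Set.Icc 0 1 ∩ Metric.sphere 0 R).Nonempty →
          ∀ k, ∃ i : Fin (m k), Crosses d (γ '' Set.Icc 0 1) (z k i) L) := by
  classical
  have hd0 : (0:ℝ) < d := by exact_mod_cast hd
  have hd1 : (1:ℝ) ≤ d := by exact_mod_cast hd
  have hsd1 : 1 ≤ Real.sqrt d := Real.one_le_sqrt.2 hd1
  have hsd0 : (0:ℝ) < Real.sqrt d := lt_of_lt_of_le one_pos hsd1
  refine ⟨(d:ℝ) * ((8*(d:ℝ)+2) * (3*Real.sqrt d)^(d-1)), ?_, ?_⟩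
  · have h3 : (1:ℝ) ≤ (3*Real.sqrt d)^(d-1) := one_le_pow₀ (by linarith)
    have h4 : (1:ℝ) ≤ 8*(d:ℝ)+2 := by linarith
    have h5 : (1:ℝ) ≤ (8*(d:ℝ)+2) * (3*Real.sqrt d)^(d-1) := by
      nlinarith [mul_nonneg (by linarith : (0:ℝ) ≤ 8*(d:ℝ)+2-1) (by linarith : (0:ℝ) ≤ (3*Real.sqrt d)^(d-1)-1)]
    nlinarith [mul_nonneg (by linarith : (0:ℝ) ≤ (d:ℝ)-1) (by linarith : (0:ℝ) ≤ (8*(d:ℝ)+2) * (3*Real.sqrt d)^(d-1)-1)]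
  intro R M L hR hM hL
  set sd : ℝ := Real.sqrt d with hsd_def
  have hL0 : 0 < L := lt_of_lt_of_le (by positivity) hL
  have hM0 : 0 < M := lt_of_lt_of_le (by positivity) hM
  have hR0 : 0 < R := lt_of_lt_of_le (by positivity) hR
  have h6sd : (6:ℝ) ≤ 6 * sd := by linarith
  have hL6 : (6:ℝ) ≤ L := le_trans h6sd hL
  have hM6 : (6:ℝ) ≤ M := le_trans h6sd hM
  set s : ℝ := 2*L/sd with hs_def
  have hs0 : 0 < s := by positivity
  set n := Nat.floor (R / (6 * M * L)) with hn
  set r : ℕ → ℝ := fun k => 6*((k:ℝ)+1)*M*L with hr_def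
  set B : ℤ := ⌊(R+L)/s⌋ with hB
  -- basic facts valid whenever `Fin n` is inhabited
  have hfacts : ∀ k : Fin n, r (k:ℕ) ≤ R ∧ 36*sd*L ≤ r (k:ℕ) ∧ L ≤ R := by
    intro k
    have hk1 : 1 ≤ n := k.pos
    have hone : (1:ℝ) ≤ R / (6*M*L) := by
      have := (Nat.le_floor_iff (by positivity : (0:ℝ) ≤ R / (6*M*L))).1 hk1
      simpa using this
    have hRML : 6*M*L ≤ R := by
      rw [le_div_iff₀ (by positivity)] at hone; linarith
    have hkn : ((k:ℕ):ℝ) + 1 ≤ (n:ℝ) := by exact_mod_cast k.isLt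
    have hfl : (n:ℝ) ≤ R / (6*M*L) := Nat.floor_le (by positivity)
    have hrR : r (k:ℕ) ≤ R := by
      have h1 : ((k:ℕ):ℝ) + 1 ≤ R / (6*M*L) := le_trans hkn hfl
      rw [le_div_iff₀ (by positivity)] at h1
      calc r (k:ℕ) = (((k:ℕ):ℝ) + 1) * (6*M*L) := by simp only [hr_def]; ring
        _ ≤ R := h1
    have hrlb : 36*sd*L ≤ r (k:ℕ) := by
      have hk0 : (0:ℝ) ≤ ((k:ℕ):ℝ) := Nat.cast_nonneg _
      have h1 : 6*M*L ≤ r (k:ℕ) := by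
        simp only [hr_def]
        nlinarith [mul_nonneg (mul_nonneg hM0.le hL0.le) hk0]
      have h36 : 36*sd*L ≤ 6*M*L := by nlinarith
      linarith
    have hLR : L ≤ R := by
      nlinarith [mul_nonneg hL0.le (by linarith : (0:ℝ) ≤ 6*M - 1)]
    exact ⟨hrR, hrlb, hLR⟩
  refine ⟨fun k => (shellSet d L (r (k:ℕ)) B).card,
    fun k i => toPt d L (((shellSet d L (r (k:ℕ)) B).equivFin.symm i : _) : Fin d → ℤ),
    ?_, ?_, ?_⟩
  · -- cardinality bound
    intro k
    obtain ⟨hrR, hrlb, hLR⟩ := hfacts k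
    have h2L : 2*L ≤ r (k:ℕ) := by nlinarith
    have hcard := shellSet_card hd hL0 h2L B
    have hB0 : 0 ≤ B := by
      rw [hB]; exact Int.floor_nonneg.2 (by positivity)
    have hq : (1:ℝ) ≤ R/L := (one_le_div hL0).2 hLR
    have hNbR : (((2*B+1).toNat : ℕ) : ℝ) ≤ 3*sd*(R/L) := by
      have h1 : (((2*B+1).toNat : ℕ) : ℝ) = ((2*B+1 : ℤ) : ℝ) := by
        have h0 : (0:ℤ) ≤ 2*B+1 := by linarith [hB0]
        exact_mod_cast congrArg (fun z : ℤ => (z:ℝ)) (Int.toNat_of_nonneg h0)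
      have hfl : (B:ℝ) ≤ (R+L)/s := Int.floor_le _
      have hsval : (R+L)/s = sd*(R/L)/2 + sd/2 := by
        rw [hs_def]; field_simp
      rw [h1]; push_cast
      rw [hsval] at hfl
      nlinarith [mul_nonneg (by linarith : (0:ℝ) ≤ sd) (by linarith : (0:ℝ) ≤ R/L - 1),
        mul_nonneg (by linarith : (0:ℝ) ≤ sd - 1) (by linarith : (0:ℝ) ≤ R/L)]
    have hcast : ((shellSet d L (r (k:ℕ)) B).card : ℝ)
        ≤ (d:ℝ) * ((8*(d:ℝ)+2) * (((2*B+1).toNat : ℕ) : ℝ)^(d-1)) := by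
      exact_mod_cast hcard
    calc ((shellSet d L (r (k:ℕ)) B).card : ℝ)
        ≤ (d:ℝ) * ((8*(d:ℝ)+2) * (((2*B+1).toNat : ℕ) : ℝ)^(d-1)) := hcast
      _ ≤ (d:ℝ) * ((8*(d:ℝ)+2) * (3*sd*(R/L))^(d-1)) := by
          gcongr
      _ = (d:ℝ) * ((8*(d:ℝ)+2) * (3*sd)^(d-1)) * (R/L)^(d-1) := by
          rw [mul_pow]; ring
  · -- separation
    intro k₁ k₂ hne i j p hp q hq
    obtain ⟨hrR1, hrlb1, hLR⟩ := hfacts k₁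
    obtain ⟨hrR2, hrlb2, -⟩ := hfacts k₂
    set v₁ := ((shellSet d L (r (k₁:ℕ)) B).equivFin.symm i) with hv₁def
    set v₂ := ((shellSet d L (r (k₂:ℕ)) B).equivFin.symm j) with hv₂def
    have hsh₁ := (mem_shellSet.1 v₁.2).2
    have hsh₂ := (mem_shellSet.1 v₂.2).2
    obtain ⟨w₁, hw₁, rfl⟩ := hp
    obtain ⟨w₂, hw₂, rfl⟩ := hq
    have hwn : ∀ w : EuclideanSpace ℝ (Fin d), w ∈ annulusSet d L → ‖w‖ ≤ 2*sd*L := by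
      intro w hw
      have h1 : gnorm d w ≤ 2*L := (mem_cubeSet_iff (by positivity)).1 hw.1
      have h2 := norm_le_sqrt_mul_gnorm w
      rw [← hsd_def] at h2
      nlinarith [gnorm_nonneg w]
    have hn1 := hwn w₁ hw₁
    have hn2 := hwn w₂ hw₂
    set z₁ := toPt d L (v₁ : Fin d → ℤ) with hz₁
    set z₂ := toPt d L (v₂ : Fin d → ℤ) with hz₂
    have hp1 : ‖z₁ + w₁‖ ≤ r (k₁:ℕ) + L + 2*sd*L := by
      calc ‖z₁ + w₁‖ ≤ ‖z₁‖ + ‖w₁‖ := norm_add_le _ _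
        _ ≤ r (k₁:ℕ) + L + 2*sd*L := by linarith [hsh₁.2]
    have hp2 : r (k₁:ℕ) - L - 2*sd*L ≤ ‖z₁ + w₁‖ := by
      have h1 : ‖z₁‖ ≤ ‖z₁ + w₁‖ + ‖w₁‖ := by
        calc ‖z₁‖ = ‖(z₁ + w₁) - w₁‖ := by rw [add_sub_cancel_right]
          _ ≤ ‖z₁ + w₁‖ + ‖w₁‖ := norm_sub_le _ _
      linarith [hsh₁.1]
    have hq1 : ‖z₂ + w₂‖ ≤ r (k₂:ℕ) + L + 2*sd*L := by
      calc ‖z₂ + w₂‖ ≤ ‖z₂‖ + ‖w₂‖ := norm_add_le _ _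
        _ ≤ r (k₂:ℕ) + L + 2*sd*L := by linarith [hsh₂.2]
    have hq2 : r (k₂:ℕ) - L - 2*sd*L ≤ ‖z₂ + w₂‖ := by
      have h1 : ‖z₂‖ ≤ ‖z₂ + w₂‖ + ‖w₂‖ := by
        calc ‖z₂‖ = ‖(z₂ + w₂) - w₂‖ := by rw [add_sub_cancel_right]
          _ ≤ ‖z₂ + w₂‖ + ‖w₂‖ := norm_sub_le _ _
      linarith [hsh₂.1]
    have hpq : |‖z₁ + w₁‖ - ‖z₂ + w₂‖| ≤ ‖(z₁ + w₁) - (z₂ + w₂)‖ := abs_norm_sub_norm_le _ _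
    have hD : 1 ≤ |((k₁:ℕ):ℝ) - ((k₂:ℕ):ℝ)| := by
      have h1 : ((k₁:ℕ):ℤ) ≠ ((k₂:ℕ):ℤ) := by
        intro h; exact hne (Fin.ext (by exact_mod_cast h))
      have h2 : 1 ≤ |((k₁:ℕ):ℤ) - ((k₂:ℕ):ℤ)| := Int.one_le_abs (sub_ne_zero.2 h1)
      exact_mod_cast h2
    set t := |((k₁:ℕ):ℝ) - ((k₂:ℕ):ℝ)| with ht_def
    have hrr : |r (k₁:ℕ) - r (k₂:ℕ)| = 6*M*L*t := by
      have h1 : r (k₁:ℕ) - r (k₂:ℕ) = 6*M*L*(((k₁:ℕ):ℝ) - ((k₂:ℕ):ℝ)) := by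
        simp only [hr_def]; ring
      rw [h1, abs_mul, abs_of_nonneg (by positivity : (0:ℝ) ≤ 6*M*L), ht_def]
    have htri : |r (k₁:ℕ) - r (k₂:ℕ)|
        ≤ |‖z₁ + w₁‖ - ‖z₂ + w₂‖| + (L + 2*sd*L) + (L + 2*sd*L) := by
      have hA1 : |r (k₁:ℕ) - ‖z₁ + w₁‖| ≤ L + 2*sd*L := abs_le.2 ⟨by linarith, by linarith⟩
      have hA2 : |‖z₂ + w₂‖ - r (k₂:ℕ)| ≤ L + 2*sd*L := abs_le.2 ⟨by linarith, by linarith⟩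
      calc |r (k₁:ℕ) - r (k₂:ℕ)|
          = |(r (k₁:ℕ) - ‖z₁ + w₁‖) + (‖z₁ + w₁‖ - ‖z₂ + w₂‖) + (‖z₂ + w₂‖ - r (k₂:ℕ))| := by
            ring_nf
        _ ≤ |(r (k₁:ℕ) - ‖z₁ + w₁‖) + (‖z₁ + w₁‖ - ‖z₂ + w₂‖)| + |‖z₂ + w₂‖ - r (k₂:ℕ)| :=
            abs_add_le _ _
        _ ≤ |r (k₁:ℕ) - ‖z₁ + w₁‖| + |‖z₁ + w₁‖ - ‖z₂ + w₂‖| + |‖z₂ + w₂‖ - r (k₂:ℕ)| := by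
            linarith [abs_add_le (r (k₁:ℕ) - ‖z₁ + w₁‖) (‖z₁ + w₁‖ - ‖z₂ + w₂‖)]
        _ ≤ |‖z₁ + w₁‖ - ‖z₂ + w₂‖| + (L + 2*sd*L) + (L + 2*sd*L) := by linarith
    have hkey : (M - 4*sd)*t + 2 + 4*sd ≤ 6*M*t := by
      nlinarith [mul_nonneg (by linarith : (0:ℝ) ≤ M) (by linarith : (0:ℝ) ≤ t - 1),
        mul_nonneg (by linarith : (0:ℝ) ≤ 4*sd) (by linarith : (0:ℝ) ≤ t - 1)]
    have hkeyL := mul_le_mul_of_nonneg_right hkey hL0.le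
    have hgoal : (M - 4*sd)*L*t ≤ ‖(z₁ + w₁) - (z₂ + w₂)‖ := by nlinarith [hpq, htri, hrr]
    exact hgoal
  · -- crossing
    intro γ hγ h1 hRs k
    obtain ⟨hrR, hrlb, hLR⟩ := hfacts k
    obtain ⟨p1, hp1Γ, hp1s⟩ := h1
    obtain ⟨pR, hpRΓ, hpRs⟩ := hRs
    obtain ⟨t₀, ht₀, rfl⟩ := hp1Γ
    obtain ⟨t₁, ht₁, rfl⟩ := hpRΓ
    rw [mem_sphere_iff_norm, sub_zero] at hp1s hpRs
    have hsub : Set.uIcc t₀ t₁ ⊆ Set.Icc (0:ℝ) 1 := by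
      rw [show Set.Icc (0:ℝ) 1 = Set.uIcc 0 1 from (Set.uIcc_of_le zero_le_one).symm]
      exact Set.uIcc_subset_uIcc (by rw [Set.uIcc_of_le zero_le_one]; exact ht₀)
        (by rw [Set.uIcc_of_le zero_le_one]; exact ht₁)
    have hcont : ContinuousOn (fun u => ‖γ u‖) (Set.uIcc t₀ t₁) := (hγ.mono hsub).norm
    have hmem : r (k:ℕ) ∈ Set.uIcc ‖γ t₀‖ ‖γ t₁‖ := by
      rw [hp1s, hpRs]
      refine Set.mem_uIcc.2 (Or.inl ⟨?_, hrR⟩)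
      nlinarith
    obtain ⟨tp, htp, hnp⟩ := intermediate_value_uIcc hcont hmem
    simp only at hnp
    set v : Fin d → ℤ := fun i => round (γ tp i / s) with hv_def
    have hcoord : ∀ i, |γ tp i - s * (v i)| ≤ s/2 := by
      intro i
      have h1 := abs_sub_round (γ tp i / s)
      have h2 : γ tp i - s * (v i) = s * (γ tp i / s - round (γ tp i / s)) := by
        rw [hv_def]; field_simp
      rw [h2, abs_mul, abs_of_pos hs0]
      calc s * |γ tp i / s - round (γ tp i / s)| ≤ s * (1/2) :=
            mul_le_mul_of_nonneg_left h1 hs0.le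
        _ = s/2 := by ring
    have hgn : gnorm d (γ tp - toPt d L v) ≤ s/2 := by
      apply (gnorm_le_iff (by positivity)).2
      intro i
      have h3 : (γ tp - toPt d L v) i = γ tp i - s * (v i) := by
        rw [show (γ tp - toPt d L v) i = γ tp i - toPt d L v i from rfl, toPt_apply, ← hs_def]
      rw [h3]; exact hcoord i
    have hnd : ‖γ tp - toPt d L v‖ ≤ L := by
      have h1 := norm_le_sqrt_mul_gnorm (γ tp - toPt d L v)
      rw [← hsd_def] at h1
      have h2 : sd * (s/2) = L := by rw [hs_def]; field_simp
      nlinarith [hsd0, gnorm_nonneg (γ tp - toPt d L v)]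
    have hv_mem : v ∈ shellSet d L (r (k:ℕ)) B := by
      refine mem_shellSet.2 ⟨?_, ?_, ?_⟩
      · rw [Finset.mem_Icc]
        have habs : ∀ i, |((v i : ℤ):ℝ)| ≤ (R+L)/s := by
          intro i
          have h1 := abs_sub_round (γ tp i / s)
          have hpi : |γ tp i| ≤ R := by
            have h0 := abs_coord_le_norm (γ tp) i
            rw [hnp] at h0
            linarith [hrR]
          have h2 : |γ tp i / s| ≤ R/s := by
            rw [abs_div, abs_of_pos hs0]
            exact div_le_div_of_nonneg_right hpi hs0.le
          have h4 : |((v i : ℤ):ℝ) - γ tp i / s| ≤ 1/2 := by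
            simp only [hv_def]
            rw [abs_sub_comm]
            exact h1
          have h3 : |((v i : ℤ):ℝ)| - |γ tp i / s| ≤ 1/2 :=
            le_trans (abs_sub_abs_le_abs_sub _ _) h4
          have h5 : (1:ℝ)/2 ≤ L/s := by
            have hLs : L/s = sd/2 := by rw [hs_def]; field_simp
            rw [hLs]; linarith
          have h6 : R/s + L/s = (R+L)/s := (add_div R L s).symm
          linarith
        constructor <;> intro i
        · show -B ≤ v i
          have h5 : ((-(v i) : ℤ) : ℝ) ≤ (R+L)/s := by
            push_cast
            linarith [neg_abs_le ((v i : ℤ):ℝ), habs i]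
          have h6 : -(v i) ≤ B := Int.le_floor.2 h5
          linarith
        · show v i ≤ B
          exact Int.le_floor.2 (le_trans (le_abs_self _) (habs i))
      · have h1 : ‖γ tp‖ ≤ ‖toPt d L v‖ + ‖γ tp - toPt d L v‖ := by
          calc ‖γ tp‖ = ‖toPt d L v + (γ tp - toPt d L v)‖ := by congr 1; abel
            _ ≤ ‖toPt d L v‖ + ‖γ tp - toPt d L v‖ := norm_add_le _ _
        rw [hnp] at h1
        linarith
      · have h1 : ‖toPt d L v‖ ≤ ‖γ tp‖ + ‖γ tp - toPt d L v‖ := by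
          calc ‖toPt d L v‖ = ‖γ tp - (γ tp - toPt d L v)‖ := by congr 1; abel
            _ ≤ ‖γ tp‖ + ‖γ tp - toPt d L v‖ := norm_sub_le _ _
        rw [hnp] at h1
        linarith
    refine ⟨(shellSet d L (r (k:ℕ)) B).equivFin ⟨v, hv_mem⟩, ?_⟩
    simp only [Equiv.symm_apply_apply]
    apply crosses_of_gnorm hd hγ hL0 (hsub htp) ht₀
    · rw [← hsd_def]
      have : s/2 = L/sd := by rw [hs_def]; ring
      rw [← this]
      exact hgn
    · have h1 : ‖toPt d L v‖ - ‖γ t₀‖ ≤ ‖γ t₀ - toPt d L v‖ := by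
        rw [norm_sub_rev]
        exact norm_sub_norm_le _ _
      have h2 : r (k:ℕ) - L ≤ ‖toPt d L v‖ := (mem_shellSet.1 hv_mem).2.1
      have h3 : 2*sd*L ≤ ‖γ t₀ - toPt d L v‖ := by
        rw [hp1s] at h1
        nlinarith
      have h4 := norm_le_sqrt_mul_gnorm (γ t₀ - toPt d L v)
      rw [← hsd_def] at h4
      nlinarith [hsd0]
end

section
/- Let P and Q be probability measures on a measurable space (Ω, ℱ) with Q absolutely continuous with respect to P, and suppose the relative entropy D(Q‖P) = ∫ log(dQ/dP) dQ is finite. Then for every measurable set A with Q(A) > 0, P(A) ≥ Q(A) · exp(−D(Q‖P)/Q(A) − 1). -/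
open MeasureTheory

/-- Entropic bound: if `P, Q` are probability measures with `Q ≪ P` and
finite relative entropy `D(Q‖P) = ∫ log(dQ/dP) dQ`, then for every measurable set `A` with
`Q(A) > 0`, `P(A) ≥ Q(A) exp(-D(Q‖P)/Q(A) - 1)`. -/
theorem statement16 {Ω : Type*} [MeasurableSpace Ω] (P Q : Measure Ω)
    [IsProbabilityMeasure P] [IsProbabilityMeasure Q]
    (hac : Q ≪ P)
    (hD : Integrable (fun ω => Real.log (Q.rnDeriv P ω).toReal) Q)
    (A : Set Ω) (hA : MeasurableSet A) (hQA : 0 < Q A) :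
    (Q A).toReal *
        Real.exp (-(∫ ω, Real.log (Q.rnDeriv P ω).toReal ∂Q) / (Q A).toReal - 1) ≤
      (P A).toReal := by
  set f : Ω → ℝ := fun ω => (Q.rnDeriv P ω).toReal with hf
  set g : Ω → ℝ := fun ω => (P.rnDeriv Q ω).toReal with hg
  set D : ℝ := ∫ ω, Real.log (f ω) ∂Q with hDdef
  have hPA : 0 < P A := by
    by_contra h
    push_neg at h
    exact absurd (hac (le_antisymm h (zero_le))) hQA.ne'
  set a : ℝ := (Q A).toReal with hadef
  set p : ℝ := (P A).toReal with hpdef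
  have ha : 0 < a := ENNReal.toReal_pos hQA.ne' (measure_ne_top _ _)
  have hp : 0 < p := ENNReal.toReal_pos hPA.ne' (measure_ne_top _ _)
  -- a.e. facts
  have hae : ∀ᵐ ω ∂Q, 0 < f ω ∧ g ω = (f ω)⁻¹ := by
    filter_upwards [Measure.rnDeriv_pos hac,
      (Measure.rnDeriv_lt_top Q P).filter_mono hac.ae_le,
      Measure.inv_rnDeriv hac] with ω h1 h2 h3
    refine ⟨ENNReal.toReal_pos h1.ne' h2.ne, ?_⟩
    simp only [hg, hf, ← h3, Pi.inv_apply, ENNReal.toReal_inv]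
  have hgi : Integrable g Q := Measure.integrable_toReal_rnDeriv
  -- bound on A
  have hIA : ∫ ω in A, g ω ∂Q ≤ p := Measure.setIntegral_toReal_rnDeriv_le (measure_ne_top P A)
  have hIAc : ∫ ω in Aᶜ, g ω ∂Q ≤ (P Aᶜ).toReal :=
    Measure.setIntegral_toReal_rnDeriv_le (measure_ne_top P Aᶜ)
  have hmono1 : ∀ᵐ ω ∂Q, -Real.log (f ω) ≤ Real.log (p / a) + (a / p) * g ω - 1 := by
    filter_upwards [hae] with ω hω
    obtain ⟨hf0, hginv⟩ := hω
    have hg0 : 0 < g ω := by rw [hginv]; positivity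
    have hx : 0 < (a / p) * g ω := by positivity
    have h1 : Real.log ((a / p) * g ω) ≤ (a / p) * g ω - 1 := Real.log_le_sub_one_of_pos hx
    rw [Real.log_mul (by positivity) hg0.ne', Real.log_div ha.ne' hp.ne'] at h1
    have h2 : Real.log (g ω) = -Real.log (f ω) := by
      rw [hginv, Real.log_inv]
    rw [Real.log_div hp.ne' ha.ne']
    linarith
  have hmono2 : ∀ᵐ ω ∂Q, -Real.log (f ω) ≤ g ω - 1 := by
    filter_upwards [hae] with ω hω
    obtain ⟨hf0, hginv⟩ := hω
    have hg0 : 0 < g ω := by rw [hginv]; positivity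
    have h1 : Real.log (g ω) ≤ g ω - 1 := Real.log_le_sub_one_of_pos hg0
    rw [hginv, Real.log_inv] at h1
    linarith
  have hneglog : Integrable (fun ω => -Real.log (f ω)) Q := hD.neg
  -- integral over A
  have hbA1 : Integrable (fun ω => Real.log (p / a) + (a / p) * g ω) Q := by
    exact (integrable_const _).add (hgi.const_mul _)
  have hboundA : Integrable (fun ω => Real.log (p / a) + (a / p) * g ω - 1) Q :=
    hbA1.sub (integrable_const _)
  have hintA : ∫ ω in A, -Real.log (f ω) ∂Q ≤ a * Real.log (p / a) := by
    have step1 : ∫ ω in A, -Real.log (f ω) ∂Q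
        ≤ ∫ ω in A, (Real.log (p / a) + (a / p) * g ω - 1) ∂Q :=
      integral_mono_ae hneglog.integrableOn hboundA.integrableOn
        (ae_restrict_of_ae hmono1)
    have step2 : ∫ ω in A, (Real.log (p / a) + (a / p) * g ω - 1) ∂Q
        = a * Real.log (p / a) + (a / p) * ∫ ω in A, g ω ∂Q - a := by
      rw [integral_sub hbA1.integrableOn (integrable_const _).integrableOn,
        integral_add (integrable_const _).integrableOn (hgi.const_mul _).integrableOn,
        integral_const_mul, setIntegral_const, setIntegral_const]
      simp [hadef, smul_eq_mul, mul_comm]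
      rfl
    have step3 : (a / p) * ∫ ω in A, g ω ∂Q ≤ a := by
      have : (a / p) * ∫ ω in A, g ω ∂Q ≤ (a / p) * p :=
        mul_le_mul_of_nonneg_left hIA (by positivity)
      rwa [div_mul_cancel₀ a hp.ne'] at this
    linarith
  -- integral over Aᶜ
  have hQAc : (Q Aᶜ).toReal = 1 - a := by
    rw [measure_compl hA (measure_ne_top _ _), measure_univ,
      ENNReal.toReal_sub_of_le prob_le_one (by simp)]
    simp [hadef]
  have hintAc : ∫ ω in Aᶜ, -Real.log (f ω) ∂Q ≤ a := by
    have step1 : ∫ ω in Aᶜ, -Real.log (f ω) ∂Q ≤ ∫ ω in Aᶜ, (g ω - 1) ∂Q :=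
      integral_mono_ae hneglog.integrableOn (hgi.sub (integrable_const _)).integrableOn
        (ae_restrict_of_ae hmono2)
    have step2 : ∫ ω in Aᶜ, (g ω - 1) ∂Q
        = (∫ ω in Aᶜ, g ω ∂Q) - (Q Aᶜ).toReal := by
      rw [integral_sub hgi.integrableOn (integrable_const _).integrableOn, setIntegral_const]
      simp
      rfl
    have hP1 : (P Aᶜ).toReal ≤ 1 := by
      simpa using ENNReal.toReal_mono (by simp) (prob_le_one (μ := P) (s := Aᶜ))
    rw [step2, hQAc] at step1
    linarith
  -- combine
  have hsplit : ∫ ω in A, -Real.log (f ω) ∂Q + ∫ ω in Aᶜ, -Real.log (f ω) ∂Q = -D := by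
    rw [integral_add_compl hA hneglog, hDdef, integral_neg]
  have key : -D ≤ a * Real.log (p / a) + a := by linarith
  rw [Real.log_div hp.ne' ha.ne'] at key
  have h4 : -D / a ≤ Real.log p - Real.log a + 1 := by
    rw [div_le_iff₀ ha]
    nlinarith
  calc a * Real.exp (-D / a - 1)
      = Real.exp (Real.log a + (-D / a - 1)) := by rw [Real.exp_add, Real.exp_log ha]
    _ ≤ Real.exp (Real.log p) := Real.exp_le_exp.mpr (by linarith)
    _ = p := Real.exp_log hp
end
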